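/- arXiv:1707.09908 — 6 statements merged into one kernel-verified Lean document; each statement's English description precedes it below -/
import Mathlib

section
/- Let T be an unrooted binary phylogenetic tree with leaf set X, n = |X| ≥ 3, and edge weights w : E(T) → ℝ. Then for every leaf i the Shapley value of i in the phylogenetic tree game (X, PD) is given by the linear formula SV_i = Σ_{k ∈ E(T)} (f(i,k)/(n·c(i,k))) · w(k); i.e., the Shapley value is the linear transformation of the edge-weight vector whose (i,k) coefficient is f(i,k)/(n·c(i,k)). -/
open Finset

noncomputable section
open scoped Classical

/-- The set of leaves (degree-1 vertices) of a graph. -/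
def phyloLeaves {V : Type*} [Fintype V] (G : SimpleGraph V) : Finset V :=
  Finset.univ.filter fun v => G.degree v = 1

/-- Split count `c(i,k)`: the number of leaves in the component of `T - k` containing `i`. -/
def splitC {V : Type*} [Fintype V] (G : SimpleGraph V) (i : V) (k : Sym2 V) : ℕ :=
  ((phyloLeaves G).filter fun v => (G.deleteEdges {k}).Reachable i v).card

/-- Split count `f(i,k)`: the number of leaves in the component of `T - k` not containing `i`. -/
def splitF {V : Type*} [Fintype V] (G : SimpleGraph V) (i : V) (k : Sym2 V) : ℕ :=
  ((phyloLeaves G).filter fun v => ¬ (G.deleteEdges {k}).Reachable i v).card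

/-- Phylogenetic diversity of a set `S` of leaves: the sum of the weights of all edges `e`
such that both components of `T - e` contain an element of `S`. -/
def PD {V : Type*} [Fintype V] (G : SimpleGraph V) (w : Sym2 V → ℝ) (S : Finset V) : ℝ :=
  ∑ e ∈ G.edgeFinset,
    if ∃ a ∈ S, ∃ b ∈ S, ¬ (G.deleteEdges {e}).Reachable a b then w e else 0

/-- The Shapley value of leaf `i` in the phylogenetic tree game. -/
def SV {V : Type*} [Fintype V] (G : SimpleGraph V) (w : Sym2 V → ℝ) (i : V) : ℝ :=
  (1 / ((phyloLeaves G).card.factorial : ℝ)) *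
    ∑ S ∈ (phyloLeaves G).powerset.filter (fun S => i ∈ S),
      ((S.card - 1).factorial : ℝ) * (((phyloLeaves G).card - S.card).factorial : ℝ) *
        (PD G w S - PD G w (S.erase i))

/-- The type of leaves of `G`. -/
abbrev PLeaf {V : Type*} [Fintype V] (G : SimpleGraph V) := {v : V // G.degree v = 1}

/-- The type of edges of `G`. -/
abbrev PEdge {V : Type*} (G : SimpleGraph V) := ↥G.edgeSet

/-- The Shapley transformation matrix, with rows indexed by leaves and columns by edges;
its `(i,k)` entry is `f(i,k)/(n·c(i,k))`. -/
def shapleyMatrix {V : Type*} [Fintype V] (G : SimpleGraph V) :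
    Matrix (PLeaf G) (PEdge G) ℝ := fun i k =>
  (splitF G i.1 k.1 : ℝ) / (((phyloLeaves G).card : ℝ) * (splitC G i.1 k.1 : ℝ))

namespace ShapleyAux

variable {V : Type*}

lemma reach_endpoint (G : SimpleGraph V) {u v x : V} (p : G.Walk x u) :
    (G.deleteEdges {s(u,v)}).Reachable x u ∨ (G.deleteEdges {s(u,v)}).Reachable x v := by
  induction p with
  | nil => exact Or.inl (SimpleGraph.Reachable.refl _)
  | @cons a b c hab p ih =>
    by_cases hedge : s(a, b) = s(c, v)
    · rw [Sym2.eq_iff] at hedge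
      rcases hedge with ⟨rfl, rfl⟩ | ⟨rfl, rfl⟩
      · exact Or.inl (SimpleGraph.Reachable.refl _)
      · exact Or.inr (SimpleGraph.Reachable.refl _)
    · have hadj : (G.deleteEdges {s(c,v)}).Adj a b := by
        rw [SimpleGraph.deleteEdges_adj]
        exact ⟨hab, by simpa using hedge⟩
      rcases ih with h | h
      · exact Or.inl (hadj.reachable.trans h)
      · exact Or.inr (hadj.reachable.trans h)

lemma two_comp (G : SimpleGraph V) (hc : G.Connected) {e : Sym2 V} (he : e ∈ G.edgeSet)
    {i a b : V} (ha : ¬ (G.deleteEdges {e}).Reachable i a)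
    (hb : ¬ (G.deleteEdges {e}).Reachable i b) :
    (G.deleteEdges {e}).Reachable a b := by
  induction e with
  | h u v =>
    have key : ∀ x : V, (G.deleteEdges {s(u,v)}).Reachable x u ∨
        (G.deleteEdges {s(u,v)}).Reachable x v := by
      intro x
      exact reach_endpoint G ((hc.preconnected x u).some)
    have key' : ∀ x : V, (G.deleteEdges {s(u,v)}).Reachable x v ∨
        (G.deleteEdges {s(u,v)}).Reachable x u := by
      intro x
      exact Sym2.eq_swap ▸ reach_endpoint G ((hc.preconnected x v).some)
    rcases key i with hiu | hiv
    · have ha' := (key a).resolve_left (fun h => ha (hiu.trans h.symm))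
      have hb' := (key b).resolve_left (fun h => hb (hiu.trans h.symm))
      exact ha'.trans hb'.symm
    · have ha' := (key' a).resolve_left (fun h => ha (hiv.trans h.symm))
      have hb' := (key' b).resolve_left (fun h => hb (hiv.trans h.symm))
      exact ha'.trans hb'.symm

lemma term_eq (f c b : ℕ) (hb : b ∈ Icc 1 f) (hc : 0 < c) :
    f.choose b * (b.factorial * (f + c - 1 - b).factorial)
      = f.factorial * (c - 1).factorial * ((c - 1 + (f - b)).choose (c - 1)) := by
  rw [mem_Icc] at hb
  obtain ⟨hb1, hbf⟩ := hb
  have h1 : f + c - 1 - b = c - 1 + (f - b) := by omega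
  have h2 : (c - 1 + (f - b)).choose (c - 1) * (c-1).factorial * (f - b).factorial
      = (c - 1 + (f - b)).factorial := by
    have := Nat.choose_mul_factorial_mul_factorial (Nat.le_add_right (c-1) (f-b))
    simpa using this
  have h3 : f.choose b * b.factorial * (f - b).factorial = f.factorial :=
    Nat.choose_mul_factorial_mul_factorial hbf
  -- multiply both sides by (f-b)! and cancel
  have hpos : 0 < (f - b).factorial := Nat.factorial_pos _
  apply Nat.eq_of_mul_eq_mul_right hpos
  calc f.choose b * (b.factorial * (f + c - 1 - b).factorial) * (f-b).factorial
      = (f.choose b * b.factorial * (f-b).factorial) * (f + c - 1 - b).factorial := by ring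
    _ = f.factorial * (c - 1 + (f - b)).factorial := by rw [h3, h1]
    _ = f.factorial * ((c - 1 + (f - b)).choose (c - 1) * (c-1).factorial * (f - b).factorial) := by
        rw [h2]
    _ = f.factorial * (c - 1).factorial * ((c - 1 + (f - b)).choose (c - 1)) * (f-b).factorial := by
        ring

lemma nat_key (f c : ℕ) (hc : 0 < c) :
    c * ∑ b ∈ Icc 1 f, f.choose b * (b.factorial * (f + c - 1 - b).factorial)
      = f * (f + c - 1).factorial := by
  rcases Nat.eq_zero_or_pos f with rfl | hf
  · simp
  have hsum : ∑ b ∈ Icc 1 f, f.choose b * (b.factorial * (f + c - 1 - b).factorial)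
      = f.factorial * (c - 1).factorial * ∑ b ∈ Icc 1 f, (c - 1 + (f - b)).choose (c - 1) := by
    rw [mul_sum]
    exact Finset.sum_congr rfl fun b hb => term_eq f c b hb hc
  have hre : ∑ b ∈ Icc 1 f, (c - 1 + (f - b)).choose (c - 1)
      = ∑ m ∈ Icc (c-1) (c - 1 + (f-1)), m.choose (c - 1) := by
    apply Finset.sum_nbij' (fun b => c - 1 + (f - b)) (fun m => f - (m - (c-1)))
    · intro a ha; rw [mem_Icc] at *; omega
    · intro a ha; rw [mem_Icc] at *; omega
    · intro a ha; rw [mem_Icc] at ha; omega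
    · intro a ha; rw [mem_Icc] at ha; omega
    · intro a ha; rfl
  have hst : ∑ m ∈ Icc (c-1) (c - 1 + (f-1)), m.choose (c - 1)
      = (c - 1 + (f-1) + 1).choose (c - 1 + 1) := Nat.sum_Icc_choose _ _
  have hcf : c - 1 + (f-1) + 1 = f + c - 1 := by omega
  have hcc : c - 1 + 1 = c := by omega
  rw [hsum, hre, hst, hcf, hcc]
  -- goal: c * (f! * (c-1)! * (f+c-1).choose c) = f * (f+c-1)!
  have hkey : (f + c - 1).choose c * c.factorial * (f - 1).factorial = (f + c - 1).factorial := by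
    have hle : c ≤ f + c - 1 := by omega
    have := Nat.choose_mul_factorial_mul_factorial hle
    have h4 : f + c - 1 - c = f - 1 := by omega
    rwa [h4] at this
  have hcfac : c * (c-1).factorial = c.factorial := by
    have : c = (c-1) + 1 := by omega
    rw [this]; simp [Nat.factorial_succ]
  have hffac : f.factorial = f * (f-1).factorial := by
    have : f = (f-1) + 1 := by omega
    rw [this]; simp [Nat.factorial_succ]
  apply Nat.eq_of_mul_eq_mul_right (Nat.factorial_pos (f-1))
  calc c * (f.factorial * (c - 1).factorial * (f + c - 1).choose c) * (f-1).factorial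
      = (f * (f-1).factorial) * (c * (c-1).factorial) * (f + c - 1).choose c * (f-1).factorial := by
        rw [← hffac]; ring
    _ = f * ((f + c - 1).choose c * c.factorial * (f - 1).factorial) * (f-1).factorial := by
        rw [hcfac]; ring
    _ = f * (f + c - 1).factorial * (f-1).factorial := by rw [hkey]

section
variable [Fintype V]

/-- The leaves on the far side of edge `e` from `i`. -/
def Fset (G : SimpleGraph V) (i : V) (e : Sym2 V) : Finset V :=
  (phyloLeaves G).filter fun v => ¬ (G.deleteEdges {e}).Reachable i v

lemma delta_eq (G : SimpleGraph V) (hc : G.Connected) {e : Sym2 V} (he : e ∈ G.edgeSet)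
    (i : V) (S : Finset V) (hS : S ⊆ phyloLeaves G) (hiS : i ∈ S) :
    ((if ∃ a ∈ S, ∃ b ∈ S, ¬ (G.deleteEdges {e}).Reachable a b then (1:ℝ) else 0)
      - (if ∃ a ∈ S.erase i, ∃ b ∈ S.erase i, ¬ (G.deleteEdges {e}).Reachable a b
          then (1:ℝ) else 0))
    = if (S.erase i).Nonempty ∧ S.erase i ⊆ Fset G i e then 1 else 0 := by
  by_cases hP : (S.erase i).Nonempty ∧ S.erase i ⊆ Fset G i e
  · obtain ⟨⟨b, hb⟩, hsub⟩ := hP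
    have hbF : ¬ (G.deleteEdges {e}).Reachable i b := by
      have := hsub hb
      simp only [Fset, mem_filter] at this
      exact this.2
    rw [if_pos ⟨i, hiS, b, Finset.mem_of_mem_erase hb, hbF⟩,
      if_neg ?_, if_pos ⟨⟨b, hb⟩, hsub⟩]
    · norm_num
    · rintro ⟨a, ha, b', hb', hab⟩
      have hai : ¬ (G.deleteEdges {e}).Reachable i a := by
        have := hsub ha; simp only [Fset, mem_filter] at this; exact this.2
      have hbi : ¬ (G.deleteEdges {e}).Reachable i b' := by
        have := hsub hb'; simp only [Fset, mem_filter] at this; exact this.2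
      exact hab (two_comp G hc he hai hbi)
  · rw [if_neg hP]
    rcases Finset.eq_empty_or_nonempty (S.erase i) with hemp | hne
    · have hSi : S = {i} := by
        have := (Finset.erase_eq_empty_iff S i).mp hemp
        rcases this with rfl | h
        · exact absurd hiS (by simp)
        · exact h
      subst hSi
      rw [if_neg, if_neg]
      · ring
      · rintro ⟨a, ha, b, hb, hab⟩; simp at ha hb
      · rintro ⟨a, ha, b, hb, hab⟩
        simp only [mem_singleton] at ha hb
        subst ha; subst hb
        exact hab (SimpleGraph.Reachable.refl _)
    · have hnsub : ¬ (S.erase i ⊆ Fset G i e) := fun h => hP ⟨hne, h⟩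
      obtain ⟨a, haE, haF⟩ := Finset.not_subset.mp hnsub
      have haX : a ∈ phyloLeaves G := hS (Finset.mem_of_mem_erase haE)
      have hia : (G.deleteEdges {e}).Reachable i a := by
        by_contra h
        exact haF (by simp only [Fset, mem_filter]; exact ⟨haX, h⟩)
      have hiff : (∃ x ∈ S, ∃ y ∈ S, ¬ (G.deleteEdges {e}).Reachable x y)
          ↔ (∃ x ∈ S.erase i, ∃ y ∈ S.erase i, ¬ (G.deleteEdges {e}).Reachable x y) := by
        constructor
        · rintro ⟨x, hx, y, hy, hxy⟩
          by_cases hxi : x = i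
          · have hyi : y ≠ i := fun h => hxy (by rw [hxi, h])
            refine ⟨a, haE, y, Finset.mem_erase.mpr ⟨hyi, hy⟩,
              fun h => hxy (by rw [hxi]; exact hia.trans h)⟩
          · by_cases hyi : y = i
            · refine ⟨x, Finset.mem_erase.mpr ⟨hxi, hx⟩, a, haE,
                fun h => hxy (by rw [hyi]; exact h.trans hia.symm)⟩
            · exact ⟨x, Finset.mem_erase.mpr ⟨hxi, hx⟩, y, Finset.mem_erase.mpr ⟨hyi, hy⟩, hxy⟩
        · rintro ⟨x, hx, y, hy, hxy⟩
          exact ⟨x, Finset.mem_of_mem_erase hx, y, Finset.mem_of_mem_erase hy, hxy⟩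
      rw [if_congr hiff rfl rfl]
      ring

end

lemma coef_eq (G : SimpleGraph V) [Fintype V] (hc : G.Connected) {e : Sym2 V}
    (he : e ∈ G.edgeSet) (i : V) (hiX : i ∈ phyloLeaves G) :
    (1 / (((phyloLeaves G).card.factorial : ℝ))) *
      ∑ S ∈ (phyloLeaves G).powerset.filter (fun S => i ∈ S),
        ((S.card - 1).factorial : ℝ) * (((phyloLeaves G).card - S.card).factorial : ℝ) *
          (if (S.erase i).Nonempty ∧ S.erase i ⊆ Fset G i e then 1 else 0)
    = (splitF G i e : ℝ) / (((phyloLeaves G).card : ℝ) * (splitC G i e : ℝ)) := by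
  classical
  set n := (phyloLeaves G).card with hn
  set F := Fset G i e with hF
  set f := F.card with hf
  set c := splitC G i e with hcdef
  have hsplitF : splitF G i e = f := rfl
  have hcf : c + f = n := by
    exact
      Finset.card_filter_add_card_filter_not
        (s := phyloLeaves G) (p := fun v => (G.deleteEdges {e}).Reachable i v)
  have hiF : i ∉ F := by
    simp only [hF, Fset, Finset.mem_filter, not_and, not_not]
    intro _
    exact SimpleGraph.Reachable.refl _
  have hc1 : 0 < c := by
    rw [hcdef]
    exact Finset.card_pos.mpr ⟨i, Finset.mem_filter.mpr ⟨hiX, SimpleGraph.Reachable.refl _⟩⟩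
  have hFX : F ⊆ phyloLeaves G := Finset.filter_subset _ _
  -- Step 1: reduce the sum over coalitions to a sum over subsets of F
  have step1 : ∑ S ∈ (phyloLeaves G).powerset.filter (fun S => i ∈ S),
        ((S.card - 1).factorial : ℝ) * ((n - S.card).factorial : ℝ) *
          (if (S.erase i).Nonempty ∧ S.erase i ⊆ F then 1 else 0)
      = ∑ B ∈ F.powerset.filter (fun B => B.Nonempty),
          ((B.card.factorial : ℝ) * ((n - 1 - B.card).factorial : ℝ)) := by
    rw [Finset.sum_congr rfl (fun S _ => by
      rw [mul_ite, mul_one, mul_zero])]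
    rw [← Finset.sum_filter]
    apply Finset.sum_nbij' (fun S => S.erase i) (fun B => insert i B)
    · intro S hS
      simp only [Finset.mem_filter, Finset.mem_powerset] at hS ⊢
      exact ⟨hS.2.2, hS.2.1⟩
    · intro B hB
      simp only [Finset.mem_filter, Finset.mem_powerset] at hB ⊢
      have hiB : i ∉ B := fun h => hiF (hB.1 h)
      refine ⟨⟨?_, Finset.mem_insert_self _ _⟩, ?_, ?_⟩
      · intro x hx
        rcases Finset.mem_insert.mp hx with rfl | hx
        · exact hiX
        · exact hFX (hB.1 hx)
      · rw [Finset.erase_insert hiB]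
        exact hB.2
      · rw [Finset.erase_insert hiB]
        exact hB.1
    · intro S hS
      simp only [Finset.mem_filter, Finset.mem_powerset] at hS
      exact Finset.insert_erase hS.1.2
    · intro B hB
      simp only [Finset.mem_filter, Finset.mem_powerset] at hB
      exact Finset.erase_insert (fun h => hiF (hB.1 h))
    · intro S hS
      simp only [Finset.mem_filter, Finset.mem_powerset] at hS
      have hiS : i ∈ S := hS.1.2
      have hcard : (S.erase i).card = S.card - 1 := Finset.card_erase_of_mem hiS
      have hS1 : 1 ≤ S.card := Finset.card_pos.mpr ⟨i, hiS⟩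
      rw [hcard]
      have harg : n - 1 - (S.card - 1) = n - S.card := by omega
      rw [harg]
  -- Step 2: evaluate the sum over subsets of F
  have inner : ∀ j ∈ Finset.range (f + 1),
      ∑ B ∈ Finset.powersetCard j F,
          (if B.Nonempty then (B.card.factorial : ℝ) * ((n - 1 - B.card).factorial : ℝ) else 0)
        = (f.choose j : ℝ) *
            (if j ≠ 0 then (j.factorial : ℝ) * ((n - 1 - j).factorial : ℝ) else 0) := by
    intro j hj
    have hterm : ∀ B ∈ Finset.powersetCard j F,
        (if B.Nonempty then (B.card.factorial : ℝ) * ((n - 1 - B.card).factorial : ℝ) else 0)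
          = (if j ≠ 0 then (j.factorial : ℝ) * ((n - 1 - j).factorial : ℝ) else 0) := by
      intro B hB
      have hBj : B.card = j := (Finset.mem_powersetCard.mp hB).2
      rw [← hBj]
      have hiffB : B.Nonempty ↔ B.card ≠ 0 := by
        rw [Finset.nonempty_iff_ne_empty, ne_eq, ne_eq, Finset.card_eq_zero]
      rw [if_congr hiffB rfl rfl]
    rw [Finset.sum_congr rfl hterm, Finset.sum_const, Finset.card_powersetCard,
      nsmul_eq_mul, ← hf]
  have step2 : ∑ B ∈ F.powerset.filter (fun B => B.Nonempty),
        ((B.card.factorial : ℝ) * ((n - 1 - B.card).factorial : ℝ))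
      = ((∑ b ∈ Finset.Icc 1 f, f.choose b * (b.factorial * (n - 1 - b).factorial) : ℕ) : ℝ) := by
    rw [Finset.sum_filter, Finset.sum_powerset, Finset.sum_congr rfl inner]
    simp only [mul_ite, mul_zero]
    rw [← Finset.sum_filter]
    have hfilter : (Finset.range (f + 1)).filter (fun j => j ≠ 0) = Finset.Icc 1 f := by
      ext j
      simp only [Finset.mem_filter, Finset.mem_range, Finset.mem_Icc, ne_eq]
      omega
    rw [hfilter]
    push_cast
    exact Finset.sum_congr rfl fun x _ => by ring
  -- Step 3: the Nat identity
  have hnat : c * (∑ b ∈ Finset.Icc 1 f, f.choose b * (b.factorial * (n - 1 - b).factorial))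
      = f * (n - 1).factorial := by
    have := nat_key f c hc1
    have hn' : f + c = n := by omega
    rw [hn'] at this
    exact this
  -- Step 4: conclude
  set T := ∑ b ∈ Finset.Icc 1 f, f.choose b * (b.factorial * (n - 1 - b).factorial) with hTdef
  rw [step1, step2, hsplitF]
  have hn1 : 1 ≤ n := by omega
  have hfact : ((n.factorial : ℝ)) = (n : ℝ) * ((n - 1).factorial : ℝ) := by
    have h := Nat.mul_factorial_pred (n := n) (by omega)
    exact_mod_cast h.symm
  have hTcast : (c : ℝ) * ((∑ b ∈ Finset.Icc 1 f, f.choose b * (b.factorial * (n - 1 - b).factorial) : ℕ) : ℝ)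
      = (f : ℝ) * ((n - 1).factorial : ℝ) := by exact_mod_cast hnat
  have hnf : ((n.factorial : ℝ)) ≠ 0 := by positivity
  have hne : (n : ℝ) * (c : ℝ) ≠ 0 := by
    have : (0:ℝ) < (n:ℝ) * c := by
      have h1 : 0 < n := by omega
      positivity
    exact ne_of_gt this
  field_simp
  linear_combination ((n:ℝ)) * hTcast - ((f:ℝ)) * hfact

end ShapleyAux

/-- For an unrooted binary phylogenetic tree with `n ≥ 3` leaves and edge
weights `w`, the Shapley value of every leaf `i` is the linear expression
`SV_i = Σ_{k ∈ E(T)} (f(i,k)/(n·c(i,k))) · w(k)`. -/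
theorem shapley_linear_formula {V : Type*} [Fintype V] (G : SimpleGraph V)
    (hT : G.IsTree) (hdeg : ∀ v, G.degree v = 1 ∨ G.degree v = 3)
    (hn : 3 ≤ (phyloLeaves G).card) (w : Sym2 V → ℝ)
    (i : V) (hi : G.degree i = 1) :
    SV G w i =
      ∑ k ∈ G.edgeFinset,
        (splitF G i k : ℝ) / (((phyloLeaves G).card : ℝ) * (splitC G i k : ℝ)) * w k := by
  classical
  have hconn : G.Connected := hT.isConnected
  have hiX : i ∈ phyloLeaves G := by simp [phyloLeaves, hi]
  have hPD : ∀ S : Finset V, PD G w S - PD G w (S.erase i)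
      = ∑ e ∈ G.edgeFinset,
          ((if ∃ a ∈ S, ∃ b ∈ S, ¬ (G.deleteEdges {e}).Reachable a b then (1:ℝ) else 0)
            - (if ∃ a ∈ S.erase i, ∃ b ∈ S.erase i, ¬ (G.deleteEdges {e}).Reachable a b
                then (1:ℝ) else 0)) * w e := by
    intro S
    rw [PD, PD, ← Finset.sum_sub_distrib]
    refine Finset.sum_congr rfl fun e _ => ?_
    by_cases h1 : ∃ a ∈ S, ∃ b ∈ S, ¬ (G.deleteEdges {e}).Reachable a b <;>
      by_cases h2 : ∃ a ∈ S.erase i, ∃ b ∈ S.erase i, ¬ (G.deleteEdges {e}).Reachable a b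
    · rw [if_pos h1, if_pos h2, if_pos h1, if_pos h2]; ring
    · rw [if_pos h1, if_neg h2, if_pos h1, if_neg h2]; ring
    · rw [if_neg h1, if_pos h2, if_neg h1, if_pos h2]; ring
    · rw [if_neg h1, if_neg h2, if_neg h1, if_neg h2]; ring
  rw [SV]
  have h1 : ∀ S ∈ (phyloLeaves G).powerset.filter (fun S => i ∈ S),
      ((S.card - 1).factorial : ℝ) * (((phyloLeaves G).card - S.card).factorial : ℝ) *
        (PD G w S - PD G w (S.erase i))
      = ∑ e ∈ G.edgeFinset,
          ((S.card - 1).factorial : ℝ) * (((phyloLeaves G).card - S.card).factorial : ℝ) *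
            (((if ∃ a ∈ S, ∃ b ∈ S, ¬ (G.deleteEdges {e}).Reachable a b then (1:ℝ) else 0)
              - (if ∃ a ∈ S.erase i, ∃ b ∈ S.erase i, ¬ (G.deleteEdges {e}).Reachable a b
                  then (1:ℝ) else 0)) * w e) := by
    intro S _
    rw [hPD S, Finset.mul_sum]
  rw [Finset.sum_congr rfl h1, Finset.sum_comm]
  have h2 : ∀ e ∈ G.edgeFinset,
      ∑ S ∈ (phyloLeaves G).powerset.filter (fun S => i ∈ S),
          ((S.card - 1).factorial : ℝ) * (((phyloLeaves G).card - S.card).factorial : ℝ) *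
            (((if ∃ a ∈ S, ∃ b ∈ S, ¬ (G.deleteEdges {e}).Reachable a b then (1:ℝ) else 0)
              - (if ∃ a ∈ S.erase i, ∃ b ∈ S.erase i, ¬ (G.deleteEdges {e}).Reachable a b
                  then (1:ℝ) else 0)) * w e)
      = (∑ S ∈ (phyloLeaves G).powerset.filter (fun S => i ∈ S),
          ((S.card - 1).factorial : ℝ) * (((phyloLeaves G).card - S.card).factorial : ℝ) *
            (if (S.erase i).Nonempty ∧ S.erase i ⊆ ShapleyAux.Fset G i e then 1 else 0)) * w e := by
    intro e he
    rw [Finset.sum_mul]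
    refine Finset.sum_congr rfl fun S hS => ?_
    simp only [Finset.mem_filter, Finset.mem_powerset] at hS
    rw [ShapleyAux.delta_eq G hconn (SimpleGraph.mem_edgeFinset.mp he) i S hS.1 hS.2]
    ring
  rw [Finset.sum_congr rfl h2, Finset.mul_sum]
  refine Finset.sum_congr rfl fun e he => ?_
  rw [← mul_assoc, ShapleyAux.coef_eq G hconn (SimpleGraph.mem_edgeFinset.mp he) i hiX]
end
end

section
/- Let T be an unrooted binary phylogenetic tree with n ≥ 4 leaves and let M be its Shapley transformation matrix, an n × (2n−3) real matrix. Then the null space of M (the space of vectors v ∈ ℝ^{2n−3} with Mv = 0) has dimension exactly n − 3; equivalently, M has rank n. -/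
open Finset

noncomputable section
open scoped Classical

section ShapleyAux

variable {V : Type*} [Fintype V] {G : SimpleGraph V}

lemma aux_adj_eq {i u x : V} (hi : G.degree i = 1) (hu : G.Adj i u) (hx : G.Adj i x) :
    x = u := by
  have h1 : u ∈ G.neighborFinset i := by simpa using hu
  have h2 : x ∈ G.neighborFinset i := by simpa using hx
  have hc : (G.neighborFinset i).card ≤ 1 := by
    rw [G.card_neighborFinset_eq_degree, hi]
  exact Finset.card_le_one.mp hc x h2 u h1

lemma aux_isolated {i u : V} (hi : G.degree i = 1) (hu : G.Adj i u) {v : V}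
    (h : (G.deleteEdges {s(i, u)}).Reachable i v) : v = i := by
  obtain ⟨w⟩ := h
  cases w with
  | nil => rfl
  | cons h' w' =>
    rw [SimpleGraph.deleteEdges_adj] at h'
    have hx := aux_adj_eq hi hu h'.1
    exact absurd (by rw [hx]; exact Set.mem_singleton _) h'.2

lemma aux_reach (hT : G.IsTree) {i u : V} (hi : G.degree i = 1) (hu : G.Adj i u)
    {a b : V} (ha : a ≠ i) (hb : b ≠ i) : (G.deleteEdges {s(i, u)}).Reachable a b := by
  obtain ⟨w0⟩ := hT.isConnected.preconnected a b
  set p : G.Walk a b := (w0.toPath : G.Walk a b) with hpdef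
  have hp : p.IsPath := w0.toPath.2
  have hiS : i ∉ p.support := by
    intro hiS
    have hnd := hp.support_nodup
    rw [← p.take_spec hiS, SimpleGraph.Walk.support_append] at hnd
    have hdisj := List.disjoint_of_nodup_append hnd
    obtain ⟨x, hx, w1, hw1⟩ :=
      SimpleGraph.Walk.exists_eq_cons_of_ne (Ne.symm ha) (p.takeUntil i hiS).reverse
    have hxu : x = u := aux_adj_eq hi hu hx
    have hq : u ∈ (p.takeUntil i hiS).support := by
      have hmem : x ∈ (p.takeUntil i hiS).reverse.support := by
        rw [hw1, SimpleGraph.Walk.support_cons]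
        exact List.mem_cons_of_mem _ w1.start_mem_support
      rw [SimpleGraph.Walk.support_reverse, List.mem_reverse] at hmem
      rwa [hxu] at hmem
    obtain ⟨x', hx', w2, hw2⟩ :=
      SimpleGraph.Walk.exists_eq_cons_of_ne (Ne.symm hb) (p.dropUntil i hiS)
    have hxu' : x' = u := aux_adj_eq hi hu hx'
    have hr : u ∈ (p.dropUntil i hiS).support.tail := by
      rw [hw2, SimpleGraph.Walk.support_cons, List.tail_cons]
      exact hxu' ▸ w2.start_mem_support
    exact hdisj hq hr
  exact ⟨p.toDeleteEdge _ (fun he => hiS (p.fst_mem_support_of_mem_edges he))⟩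

lemma aux_splitC_self {i u : V} (hi : G.degree i = 1) (hu : G.Adj i u) :
    splitC G i s(i, u) = 1 := by
  have hset : ((phyloLeaves G).filter fun v => (G.deleteEdges {s(i, u)}).Reachable i v)
      = {i} := by
    ext v
    simp only [Finset.mem_filter, Finset.mem_singleton]
    constructor
    · rintro ⟨-, h⟩; exact aux_isolated hi hu h
    · rintro rfl
      exact ⟨by simp [phyloLeaves, hi], SimpleGraph.Reachable.refl _⟩
  rw [splitC, hset, Finset.card_singleton]

lemma aux_splitC_other (hT : G.IsTree) {i u l : V} (hi : G.degree i = 1) (hu : G.Adj i u)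
    (hl : G.degree l = 1) (hli : l ≠ i) :
    splitC G l s(i, u) = (phyloLeaves G).card - 1 := by
  have hmem : i ∈ phyloLeaves G := by simp [phyloLeaves, hi]
  have hset : ((phyloLeaves G).filter fun v => (G.deleteEdges {s(i, u)}).Reachable l v)
      = (phyloLeaves G).erase i := by
    ext v
    simp only [Finset.mem_filter, Finset.mem_erase]
    constructor
    · rintro ⟨hv, h⟩
      refine ⟨fun hvi => hli ?_, hv⟩
      subst hvi
      exact aux_isolated hi hu h.symm
    · rintro ⟨hvi, hv⟩
      exact ⟨hv, aux_reach hT hi hu hli hvi⟩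
  rw [splitC, hset, Finset.card_erase_of_mem hmem]

lemma aux_splitF {i : V} {k : Sym2 V} :
    splitF G i k = (phyloLeaves G).card - splitC G i k := by
  have h := Finset.card_filter_add_card_filter_not (s := phyloLeaves G)
    (p := fun v => (G.deleteEdges {k}).Reachable i v)
  rw [splitF, splitC]
  omega

lemma aux_two_leaves {j j' : V} (hj : G.degree j = 1) (hj' : G.degree j' = 1)
    (hadj : G.Adj j j') : ∀ {a v : V} (_ : G.Walk a v), a = j ∨ a = j' → v = j ∨ v = j' := by
  intro a v w
  induction w with
  | nil => exact id
  | @cons a b c h w ih =>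
    intro ha
    apply ih
    rcases ha with rfl | rfl
    · exact Or.inr (aux_adj_eq hj hadj h)
    · exact Or.inl (aux_adj_eq hj' hadj.symm h)

end ShapleyAux

set_option maxHeartbeats 1600000 in
/-- For an unrooted binary phylogenetic tree with `n ≥ 4` leaves, the null
space of the Shapley transformation matrix has dimension exactly `n − 3`; equivalently, the
matrix has rank `n`. -/
theorem shapley_matrix_nullity_rank {V : Type*} [Fintype V] (G : SimpleGraph V)
    (hT : G.IsTree) (hdeg : ∀ v, G.degree v = 1 ∨ G.degree v = 3)
    (hn : 4 ≤ (phyloLeaves G).card) :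
    Module.finrank ℝ (LinearMap.ker (shapleyMatrix G).mulVecLin)
        = (phyloLeaves G).card - 3 ∧
    (shapleyMatrix G).rank = (phyloLeaves G).card := by
  classical
  set n := (phyloLeaves G).card with hndef
  -- each leaf has a neighbor
  have hex : ∀ j : PLeaf G, ∃ u, G.Adj j.1 u := by
    intro j
    rw [← SimpleGraph.degree_pos_iff_exists_adj]
    rw [j.2]; norm_num
  choose nb hnb using hex
  -- the pendant edge map
  set ι : PLeaf G → PEdge G := fun j => ⟨s(j.1, nb j), hnb j⟩ with hιdef
  have hι : Function.Injective ι := by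
    intro j j' h
    by_contra hne
    have hne' : j.1 ≠ j'.1 := fun hv => hne (Subtype.ext hv)
    have hsym : s(j.1, nb j) = s(j'.1, nb j') := congrArg Subtype.val h
    rw [Sym2.eq_iff] at hsym
    rcases hsym with ⟨h1, h2⟩ | ⟨h1, h2⟩
    · exact hne' h1
    · -- j and j' are adjacent leaves: whole leaf set has ≤ 2 elements
      have hadj : G.Adj j.1 j'.1 := h2 ▸ hnb j
      have hsub : phyloLeaves G ⊆ {j.1, j'.1} := by
        intro v hv
        obtain ⟨w⟩ := hT.isConnected.preconnected j.1 v
        have := aux_two_leaves j.2 j'.2 hadj w (Or.inl rfl)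
        simpa using this
      have hcard : n ≤ 2 := by
        calc n ≤ ({j.1, j'.1} : Finset V).card := Finset.card_le_card hsub
          _ ≤ 2 := Finset.card_insert_le _ _ |>.trans (by simp)
      omega
  -- real versions of n
  set nr : ℝ := (n : ℝ) with hnrdef
  have hnr : (4 : ℝ) ≤ nr := by rw [hnrdef]; exact_mod_cast hn
  have hnr0 : nr ≠ 0 := by linarith
  have hnr1 : nr - 1 ≠ 0 := by linarith
  -- the square submatrix on pendant-edge columns
  set A : ℝ := (nr - 1) / nr with hAdef
  set B : ℝ := 1 / (nr * (nr - 1)) with hBdef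
  set N : Matrix (PLeaf G) (PLeaf G) ℝ :=
    Matrix.of (fun i j : PLeaf G => if i = j then A else B) with hNdef
  have hcast : ((n - 1 : ℕ) : ℝ) = nr - 1 := by
    rw [Nat.cast_sub (by omega)]; norm_num [hnrdef]
  have hMN : ∀ i j : PLeaf G, shapleyMatrix G i (ι j) = N i j := by
    intro i j
    by_cases h : i = j
    · subst h
      show (splitF G i.1 s(i.1, nb i) : ℝ) / ((n : ℝ) * (splitC G i.1 s(i.1, nb i) : ℝ)) = _
      rw [aux_splitF, aux_splitC_self i.2 (hnb i)]
      simp only [hNdef, Matrix.of_apply, if_pos rfl, hAdef]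
      rw [hcast]
      norm_num [hnrdef]
    · have hne' : i.1 ≠ j.1 := fun hv => h (Subtype.ext hv)
      show (splitF G i.1 s(j.1, nb j) : ℝ) / ((n : ℝ) * (splitC G i.1 s(j.1, nb j) : ℝ)) = _
      rw [aux_splitF, aux_splitC_other hT j.2 (hnb j) i.2 hne']
      have h1 : n - (n - 1) = 1 := by omega
      rw [h1]
      simp only [hNdef, Matrix.of_apply, if_neg h, hBdef]
      rw [hcast]
      norm_num [hnrdef]
  -- row formula for N
  have hrow : ∀ (x : PLeaf G → ℝ) (i : PLeaf G),
      N.mulVec x i = (A - B) * x i + B * ∑ j, x j := by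
    intro x i
    have hterm : ∀ j : PLeaf G, N i j * x j
        = (if i = j then (A - B) * x j else 0) + B * x j := by
      intro j
      by_cases h : i = j <;> simp [hNdef, h] <;> ring
    rw [Matrix.mulVec, dotProduct]
    rw [Finset.sum_congr rfl (fun j _ => hterm j), Finset.sum_add_distrib,
      Finset.sum_ite_eq, ← Finset.mul_sum]
    simp
  have hone : (A - B) + (Fintype.card (PLeaf G) : ℝ) * B = 1 := by
    have hcardLeaf : Fintype.card (PLeaf G) = n := by
      rw [Fintype.card_subtype]; rfl
    rw [hcardLeaf, hAdef, hBdef, ← hnrdef]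
    field_simp
    ring
  have hAB : A - B ≠ 0 := by
    have hBA : B < A := by
      rw [hAdef, hBdef, div_lt_div_iff₀ (by nlinarith : (0:ℝ) < nr * (nr - 1))
        (by linarith : (0:ℝ) < nr)]
      nlinarith [mul_nonneg (by linarith : (0:ℝ) ≤ nr)
        (by nlinarith [mul_nonneg (by linarith : (0:ℝ) ≤ nr - 4)
              (by linarith : (0:ℝ) ≤ nr + 2)] : (0:ℝ) ≤ (nr - 1) * (nr - 1) - 9)]
    linarith
  -- N has injective, hence surjective, multiplication
  have hkey : ∀ x : PLeaf G → ℝ, N.mulVec x = 0 → x = 0 := by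
    intro x hx
    have hS : (∑ j, x j) = 0 := by
      have h1 : ∑ i, N.mulVec x i = 0 := by rw [hx]; simp
      rw [Finset.sum_congr rfl (fun i _ => hrow x i), Finset.sum_add_distrib,
        Finset.sum_const, nsmul_eq_mul, ← Finset.mul_sum] at h1
      calc ∑ j, x j = ((A - B) + (Fintype.card (PLeaf G) : ℝ) * B) * ∑ j, x j := by
            rw [hone, one_mul]
        _ = (A - B) * ∑ i, x i + (Fintype.card (PLeaf G) : ℝ) * (B * ∑ i, x i) := by ring
        _ = 0 := h1
    funext i
    have h3 := hrow x i
    rw [hS, mul_zero, add_zero, congrFun hx i] at h3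
    have : (A - B) * x i = 0 := h3.symm
    have := mul_eq_zero.mp this
    simpa [hAB] using this
  have hNsurj : Function.Surjective N.mulVecLin := by
    apply LinearMap.injective_iff_surjective.mp
    rw [← LinearMap.ker_eq_bot] at *
    rw [LinearMap.ker_eq_bot']
    intro x hx
    exact hkey x (by simpa using hx)
  -- the Shapley matrix is surjective
  have hMsurj : Function.Surjective (shapleyMatrix G).mulVecLin := by
    intro y
    obtain ⟨x', hx'⟩ := hNsurj y
    refine ⟨fun k => if h : ∃ j, ι j = k then x' h.choose else 0, ?_⟩
    funext i
    rw [Matrix.mulVecLin_apply, Matrix.mulVec, dotProduct]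
    have hstep : ∑ k : PEdge G, shapleyMatrix G i k *
          (if h : ∃ j, ι j = k then x' h.choose else 0)
        = ∑ j : PLeaf G, N i j * x' j := by
      rw [← Finset.sum_subset (Finset.subset_univ ((Finset.univ : Finset (PLeaf G)).image ι))]
      · rw [Finset.sum_image (fun a _ b _ h => hι h)]
        apply Finset.sum_congr rfl
        intro j _
        have hexj : ∃ j', ι j' = ι j := ⟨j, rfl⟩
        rw [dif_pos hexj, hMN]
        congr 1
        exact congrArg x' (hι hexj.choose_spec)
      · intro k _ hk
        have hnk : ¬ ∃ j, ι j = k := by simpa [Finset.mem_image] using hk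
        rw [dif_neg hnk, mul_zero]
    rw [hstep]
    have := congrFun hx' i
    rwa [Matrix.mulVecLin_apply, Matrix.mulVec, dotProduct] at this
  have hcardLeaf : Fintype.card (PLeaf G) = n := by
    rw [Fintype.card_subtype]; rfl
  have hMrank : (shapleyMatrix G).rank = n := by
    rw [Matrix.rank, LinearMap.range_eq_top.mpr hMsurj, finrank_top, Module.finrank_pi,
      hcardLeaf]
  -- edge count
  have hEcard : Fintype.card (PEdge G) = 2 * n - 3 := by
    have hhs := G.sum_degrees_eq_twice_card_edges
    have hsplit := Finset.sum_filter_add_sum_filter_not Finset.univ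
      (fun v => G.degree v = 1) (fun v => G.degree v)
    have h1 : ∑ v ∈ Finset.univ.filter (fun v => G.degree v = 1), G.degree v = n := by
      rw [Finset.sum_congr rfl (fun v hv => (Finset.mem_filter.mp hv).2)]
      simp only [Finset.sum_const, smul_eq_mul, mul_one]
      rfl
    have h2 : ∑ v ∈ Finset.univ.filter (fun v => ¬ G.degree v = 1), G.degree v
        = (Finset.univ.filter (fun v => ¬ G.degree v = 1)).card * 3 := by
      rw [Finset.sum_congr rfl
        (fun v hv => (hdeg v).resolve_left (Finset.mem_filter.mp hv).2)]
      rw [Finset.sum_const, smul_eq_mul]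
    have hc2 := Finset.card_filter_add_card_filter_not
      (s := (Finset.univ : Finset V)) (p := fun v => G.degree v = 1)
    have hcu : (Finset.univ : Finset V).card = Fintype.card V := Finset.card_univ
    have hnfilter : (Finset.univ.filter (fun v => G.degree v = 1)).card = n := rfl
    have h3 := hT.card_edgeFinset
    have hEF : G.edgeFinset.card = 2 * n - 3 := by omega
    rw [show Fintype.card (PEdge G) = G.edgeFinset.card from
      (SimpleGraph.edgeFinset_card).symm, hEF]
  -- rank-nullity
  have hker := LinearMap.finrank_range_add_finrank_ker (shapleyMatrix G).mulVecLin
  rw [Module.finrank_pi, hEcard] at hker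
  have hrange_eq : Module.finrank ℝ (LinearMap.range (shapleyMatrix G).mulVecLin) = n := by
    rw [← Matrix.rank]; exact hMrank
  refine ⟨?_, hMrank⟩
  omega
end
end

section
/- Let T be an unrooted binary phylogenetic tree with n ≥ 4 leaves, leaves indexed 1,…,n, edges ordered so that the n leaf-incident edges come first and the internal edges I_1,…,I_{n−3} occupy columns n+1,…,2n−3 of the Shapley transformation matrix M. For each internal edge I_k define the vector w_{I_k} ∈ ℝ^{2n−3} by (w_{I_k})_i = −(f(i,I_k) − 1)/((n−2)·c(i,I_k)) for 1 ≤ i ≤ n, (w_{I_k})_{n+k} = 1, and (w_{I_k})_j = 0 otherwise. Then M · w_{I_k} = 0 for every k = 1,…,n−3. -/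
open Finset

noncomputable section
open scoped Classical

namespace ShapleyAux

open SimpleGraph

variable {V : Type*} [Fintype V] {G : SimpleGraph V}

lemma bridge (hT : G.IsTree) {a b : V} (hab : G.Adj a b) :
    ¬ (G.deleteEdges {s(a, b)}).Reachable a b :=
  isBridge_iff.mp (isAcyclic_iff_forall_adj_isBridge.mp hT.IsAcyclic hab)

lemma two_sides (hc : G.Connected) (a b v : V) :
    (G.deleteEdges {s(a, b)}).Reachable v a ∨ (G.deleteEdges {s(a, b)}).Reachable v b := by
  have key : ∀ {v w : V} (_ : G.Walk v w),
      ((G.deleteEdges {s(a, b)}).Reachable w a ∨ (G.deleteEdges {s(a, b)}).Reachable w b) →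
      ((G.deleteEdges {s(a, b)}).Reachable v a ∨ (G.deleteEdges {s(a, b)}).Reachable v b) := by
    intro v w p
    induction p with
    | nil => exact id
    | @cons x y _ h p ih =>
      intro hw
      by_cases he : s(x, y) = s(a, b)
      · rcases Sym2.eq_iff.mp he with ⟨rfl, rfl⟩ | ⟨rfl, rfl⟩
        · exact Or.inl (Reachable.refl _)
        · exact Or.inr (Reachable.refl _)
      · have hadj : (G.deleteEdges {s(a, b)}).Adj x y := by
          rw [deleteEdges_adj]; exact ⟨h, by simpa using he⟩
        rcases ih hw with h1 | h1
        · exact Or.inl (hadj.reachable.trans h1)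
        · exact Or.inr (hadj.reachable.trans h1)
  obtain ⟨p⟩ := hc v a
  exact key p (Or.inl (Reachable.refl _))

lemma leaf_unique {j u w : V} (hj : G.degree j = 1)
    (hu : G.Adj j u) (hw : G.Adj j w) : u = w := by
  have h := Finset.card_le_one.mp (le_of_eq hj)
  exact h u ((G.mem_neighborFinset j u).mpr hu) w ((G.mem_neighborFinset j w).mpr hw)

lemma leaf_isolated {j u : V} (hj : G.degree j = 1) (hu : G.Adj j u) {v : V}
    (h : (G.deleteEdges {s(j, u)}).Reachable j v) : v = j := by
  obtain ⟨p⟩ := h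
  cases p with
  | nil => rfl
  | cons h q =>
    rw [deleteEdges_adj] at h
    obtain ⟨h1, h2⟩ := h
    exact (h2 (by rw [leaf_unique hj h1 hu]; exact rfl)).elim

lemma pendant_other (hT : G.IsTree) {j u : V} (hj : G.degree j = 1) (hu : G.Adj j u)
    {v : V} (hv : v ≠ j) : (G.deleteEdges {s(j, u)}).Reachable u v := by
  rcases two_sides hT.isConnected j u v with h | h
  · exact absurd (leaf_isolated hj hu h.symm) hv
  · exact h.symm

lemma branch_subset (hT : G.IsTree) {v w w' : V} (hvw : G.Adj v w) (hww' : G.Adj w w')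
    (hne : w' ≠ v) {u : V} (h : (G.deleteEdges {s(w, w')}).Reachable w' u) :
    (G.deleteEdges {s(v, w)}).Reachable w u := by
  have hbase : (G.deleteEdges {s(v, w)}).Adj w w' := by
    rw [deleteEdges_adj]
    refine ⟨hww', ?_⟩
    simp only [Set.mem_singleton_iff, Sym2.eq_iff]
    rintro (⟨rfl, h2⟩ | ⟨h1, rfl⟩)
    · exact hvw.ne' rfl
    · exact hne rfl
  obtain ⟨p⟩ := h
  have key : ∀ {y z : V} (_ : (G.deleteEdges {s(w, w')}).Walk y z),
      (G.deleteEdges {s(w, w')}).Reachable w' y →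
      (G.deleteEdges {s(v, w)}).Reachable w y →
      (G.deleteEdges {s(v, w)}).Reachable w z := by
    intro y z p
    induction p with
    | nil => exact fun _ h2 => h2
    | @cons y y' _ h q ih =>
      intro h1 h2
      obtain ⟨hG, hne'⟩ := (deleteEdges_adj).mp h
      have h1' : (G.deleteEdges {s(w, w')}).Reachable w' y' := h1.trans h.reachable
      by_cases he : s(y, y') = s(v, w)
      · rcases Sym2.eq_iff.mp he with ⟨rfl, rfl⟩ | ⟨rfl, rfl⟩
        · exact ih h1' (Reachable.refl _)
        · exact absurd h1.symm (bridge hT hww')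
      · have hadj : (G.deleteEdges {s(v, w)}).Adj y y' :=
          (deleteEdges_adj).mpr ⟨hG, by simpa using he⟩
        exact ih h1' (h2.trans hadj.reachable)
  exact key p (Reachable.refl _) hbase.reachable

lemma branch_leaf (hT : G.IsTree) (hdeg : ∀ v, G.degree v = 1 ∨ G.degree v = 3) :
    ∀ (n : ℕ) {v w : V}, G.Adj v w →
      (Finset.univ.filter fun u => (G.deleteEdges {s(v, w)}).Reachable w u).card ≤ n →
      ∃ ℓ, G.degree ℓ = 1 ∧ (G.deleteEdges {s(v, w)}).Reachable w ℓ := by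
  intro n
  induction n with
  | zero =>
    intro v w hvw hcard
    exfalso
    have : w ∈ Finset.univ.filter fun u => (G.deleteEdges {s(v, w)}).Reachable w u := by
      simp [Reachable.refl]
    have := Finset.card_pos.mpr ⟨w, this⟩
    omega
  | succ n ih =>
    intro v w hvw hcard
    rcases hdeg w with h1 | h3
    · exact ⟨w, h1, Reachable.refl _⟩
    · have hv_mem : v ∈ G.neighborFinset w := by
        rw [SimpleGraph.mem_neighborFinset]; exact hvw.symm
      have hcard2 : 0 < (G.neighborFinset w \ {v}).card := by
        rw [Finset.card_sdiff_of_subset (by simpa using hv_mem)]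
        rw [SimpleGraph.card_neighborFinset_eq_degree, h3]
        simp
      obtain ⟨w', hw'⟩ := Finset.card_pos.mp hcard2
      rw [Finset.mem_sdiff, SimpleGraph.mem_neighborFinset, Finset.mem_singleton] at hw'
      obtain ⟨hww', hw'v⟩ := hw'
      have hssub : (Finset.univ.filter fun u => (G.deleteEdges {s(w, w')}).Reachable w' u) ⊂
          (Finset.univ.filter fun u => (G.deleteEdges {s(v, w)}).Reachable w u) := by
        constructor
        · intro u hu
          rw [Finset.mem_filter] at hu ⊢
          exact ⟨Finset.mem_univ _, branch_subset hT hvw hww' hw'v hu.2⟩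
        · intro hsub
          have hwmem : w ∈ Finset.univ.filter
              fun u => (G.deleteEdges {s(v, w)}).Reachable w u := by simp [Reachable.refl]
          have := hsub hwmem
          rw [Finset.mem_filter] at this
          exact bridge hT hww' this.2.symm
      have hlt := Finset.card_lt_card hssub
      obtain ⟨ℓ, hℓ1, hℓ2⟩ := ih hww' (by omega)
      exact ⟨ℓ, hℓ1, branch_subset hT hvw hww' hw'v hℓ2⟩

lemma not_both (hc : G.Connected) (hn : 3 ≤ (phyloLeaves G).card)
    {a b : V} (hab : G.Adj a b) (ha : G.degree a = 1) (hb : G.degree b = 1) : False := by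
  have key : ∀ {w z : V} (_ : G.Walk w z), (z = a ∨ z = b) → (w = a ∨ w = b) := by
    intro w z p
    induction p with
    | nil => exact id
    | @cons x y _ h q ih =>
      intro hz
      rcases ih hz with rfl | rfl
      · exact Or.inr (leaf_unique ha h.symm hab)
      · exact Or.inl (leaf_unique hb h.symm hab.symm)
  have hsub : phyloLeaves G ⊆ {a, b} := by
    intro ℓ _
    obtain ⟨p⟩ := hc ℓ a
    rcases key p (Or.inl rfl) with rfl | rfl <;> simp
  have h1 := Finset.card_le_card hsub
  have h2 := Finset.card_insert_le a ({b} : Finset V)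
  simp at h2
  omega

lemma mem_phyloLeaves {v : V} : v ∈ phyloLeaves G ↔ G.degree v = 1 := by
  simp [phyloLeaves]

lemma splitC_add_splitF (i : V) (k : Sym2 V) :
    splitC G i k + splitF G i k = (phyloLeaves G).card :=
  Finset.card_filter_add_card_filter_not _

lemma splitC_eq_of_reach {a j : V} {k : Sym2 V} (h : (G.deleteEdges {k}).Reachable a j) :
    splitC G j k = splitC G a k := by
  unfold splitC
  congr 1
  ext v
  simp only [Finset.mem_filter]
  exact ⟨fun ⟨hv, hr⟩ => ⟨hv, h.trans hr⟩, fun ⟨hv, hr⟩ => ⟨hv, h.symm.trans hr⟩⟩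

lemma splitC_pendant_self {j u : V} (hj : G.degree j = 1) (hu : G.Adj j u) :
    splitC G j s(j, u) = 1 := by
  unfold splitC
  rw [show ((phyloLeaves G).filter fun v => (G.deleteEdges {s(j, u)}).Reachable j v) = {j} from ?_]
  · rfl
  · ext v
    simp only [Finset.mem_filter, Finset.mem_singleton]
    constructor
    · exact fun ⟨_, hr⟩ => leaf_isolated hj hu hr
    · rintro rfl
      exact ⟨mem_phyloLeaves.mpr hj, Reachable.refl _⟩

lemma splitF_pendant_other (hT : G.IsTree) {j u : V} (hj : G.degree j = 1) (hu : G.Adj j u)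
    {i : V} (hi : G.degree i = 1) (hne : i ≠ j) : splitF G i s(j, u) = 1 := by
  unfold splitF
  rw [show ((phyloLeaves G).filter fun v => ¬ (G.deleteEdges {s(j, u)}).Reachable i v) = {j}
      from ?_]
  · rfl
  · ext v
    simp only [Finset.mem_filter, Finset.mem_singleton]
    constructor
    · rintro ⟨hv, hr⟩
      by_contra hvj
      exact hr (((pendant_other hT hj hu hne).symm.trans (pendant_other hT hj hu hvj)))
    · rintro rfl
      refine ⟨mem_phyloLeaves.mpr hj, fun hr => hne (leaf_isolated hj hu hr.symm)⟩

end ShapleyAux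

namespace ShapleyAux

lemma arith (N c f : ℝ) (hc : c ≠ 0) (hN : 4 ≤ N) (hcf : c + f = N) :
    (N-1)/N * (-(f-1)/((N-2)*c)) + 1/(N*(N-1)) * (-1 - (-(f-1)/((N-2)*c))) + f/(N*c) = 0 := by
  have hf : f = N - c := by linarith
  subst hf
  have h0 : N ≠ 0 := by intro h; rw [h] at hN; linarith
  have h1 : N - 1 ≠ 0 := by intro h; have : N = 1 := by linarith
                            rw [this] at hN; linarith
  have h2 : N - 2 ≠ 0 := by intro h; have : N = 2 := by linarith
                            rw [this] at hN; linarith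
  field_simp
  ring

lemma arithS (ca cb NN : ℝ) (h1 : ca ≠ 0) (h2 : cb ≠ 0) (h4 : ca + cb = NN) (h3 : NN - 2 ≠ 0) :
    ca * (-(cb-1)/((NN-2)*ca)) + cb * (-(ca-1)/((NN-2)*cb)) = -1 := by
  subst h4
  field_simp
  ring

end ShapleyAux

open ShapleyAux

/-- For an unrooted binary phylogenetic tree with `n ≥ 4` leaves and an
internal edge `I`, the vector whose entry at the pendant edge of leaf `i` is
`−(f(i,I) − 1)/((n−2)·c(i,I))`, whose entry at `I` is `1`, and which vanishes at every other
internal edge, lies in the null space of the Shapley transformation matrix. -/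
theorem shapley_null_vector {V : Type*} [Fintype V] (G : SimpleGraph V)
    (hT : G.IsTree) (hdeg : ∀ v, G.degree v = 1 ∨ G.degree v = 3)
    (hn : 4 ≤ (phyloLeaves G).card)
    (I : PEdge G) (hI : ∀ v, v ∈ I.1 → G.degree v ≠ 1)
    (x : PEdge G → ℝ)
    (hpend : ∀ i : V, G.degree i = 1 → ∀ e : PEdge G, i ∈ e.1 →
      x e = -(((splitF G i I.1 : ℝ) - 1) /
        ((((phyloLeaves G).card : ℝ) - 2) * (splitC G i I.1 : ℝ))))
    (hself : x I = 1)
    (hother : ∀ e : PEdge G, e ≠ I → (∀ v, v ∈ e.1 → G.degree v ≠ 1) → x e = 0) :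
    (shapleyMatrix G).mulVec x = 0 := by
  have hconn := hT.isConnected
  set n := (phyloLeaves G).card with hn_def
  obtain ⟨a, b, hIeq⟩ : ∃ a b, I.1 = s(a, b) := by
    obtain ⟨⟨a, b⟩, h⟩ := Quot.exists_rep I.1
    exact ⟨a, b, h.symm⟩
  have hadj : G.Adj a b := G.mem_edgeSet.mp (hIeq ▸ I.2)
  -- reachability facts for the internal edge
  have htwo : ∀ v, (G.deleteEdges {I.1}).Reachable v a ∨ (G.deleteEdges {I.1}).Reachable v b := by
    rw [hIeq]; exact two_sides hconn a b
  have hbr : ¬ (G.deleteEdges {I.1}).Reachable a b := by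
    rw [hIeq]; exact bridge hT hadj
  -- leaves on each side
  obtain ⟨ℓa, hℓa1, hℓa2'⟩ := branch_leaf hT hdeg (Fintype.card V) hadj.symm
    ((Finset.card_filter_le _ _).trans (le_of_eq Finset.card_univ))
  obtain ⟨ℓb, hℓb1, hℓb2'⟩ := branch_leaf hT hdeg (Fintype.card V) hadj
    ((Finset.card_filter_le _ _).trans (le_of_eq Finset.card_univ))
  have hℓa2 : (G.deleteEdges {I.1}).Reachable a ℓa := by rw [hIeq, Sym2.eq_swap]; exact hℓa2'
  have hℓb2 : (G.deleteEdges {I.1}).Reachable b ℓb := by rw [hIeq]; exact hℓb2'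
  -- neighbor function for leaves
  have hex : ∀ j : V, ∃ u, G.degree j = 1 → G.Adj j u := by
    intro j
    by_cases h : G.degree j = 1
    · obtain ⟨u, hu⟩ := G.degree_pos_iff_exists_adj j |>.mp (by omega)
      exact ⟨u, fun _ => hu⟩
    · exact ⟨j, fun h' => absurd h' h⟩
  choose nbr hnbr using hex
  let pe : V → PEdge G := fun j =>
    if h : G.degree j = 1 then ⟨s(j, nbr j), G.mem_edgeSet.mpr (hnbr j h)⟩ else I
  have hpe1 : ∀ j, G.degree j = 1 → ∀ (hj : G.degree j = 1), (pe j).1 = s(j, nbr j) := by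
    intro j hj _
    simp only [pe, dif_pos hj]
  have hjpe : ∀ j, ∀ (hj : G.degree j = 1), j ∈ (pe j).1 := by
    intro j hj
    rw [hpe1 j hj hj]
    exact Sym2.mem_mk_left j (nbr j)
  -- leaf-picking function for pendant edges
  have hex2 : ∀ k : PEdge G, ∃ v, (∃ w ∈ k.1, G.degree w = 1) → (v ∈ k.1 ∧ G.degree v = 1) := by
    intro k
    by_cases h : ∃ w ∈ k.1, G.degree w = 1
    · obtain ⟨w, hw1, hw2⟩ := h
      exact ⟨w, fun _ => ⟨hw1, hw2⟩⟩
    · exact ⟨a, fun h' => absurd h' h⟩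
  choose lf hlf using hex2
  have hpe_unique : ∀ (j : V) (hj : G.degree j = 1) (k : PEdge G), j ∈ k.1 → k = pe j := by
    intro j hj k hjk
    obtain ⟨c, hc⟩ := Sym2.mem_iff_exists.mp hjk
    have hadjc : G.Adj j c := G.mem_edgeSet.mp (hc ▸ k.2)
    have hcn : c = nbr j := leaf_unique hj hadjc (hnbr j hj)
    refine Subtype.ext ?_
    rw [hc, hcn, hpe1 j hj hj]
  -- x values at pendant edges
  have hx : ∀ j, ∀ (hj : G.degree j = 1), x (pe j) = -(((splitF G j I.1 : ℝ) - 1) /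
      (((n : ℝ) - 2) * (splitC G j I.1 : ℝ))) := by
    intro j hj
    exact hpend j hj (pe j) (hjpe j hj)
  -- the two sides
  set A : Finset V := (phyloLeaves G).filter
    (fun v => (G.deleteEdges {I.1}).Reachable a v) with hA_def
  have hcA_def : A.card = splitC G a I.1 := rfl
  set cA := splitC G a I.1 with hcA
  set cB := splitF G a I.1 with hcB
  have hcacb : cA + cB = n := splitC_add_splitF (G := G) a I.1
  have hcA1 : 1 ≤ cA := by
    rw [← hcA_def]
    exact Finset.card_pos.mpr ⟨ℓa, Finset.mem_filter.mpr ⟨mem_phyloLeaves.mpr hℓa1, hℓa2⟩⟩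
  have hnraB : ¬ (G.deleteEdges {I.1}).Reachable a ℓb := fun h => hbr (h.trans hℓb2.symm)
  have hcB1 : 1 ≤ cB := by
    rw [hcB]
    exact Finset.card_pos.mpr ⟨ℓb, Finset.mem_filter.mpr ⟨mem_phyloLeaves.mpr hℓb1, hnraB⟩⟩
  have hBset : (phyloLeaves G).filter (fun v => ¬ (G.deleteEdges {I.1}).Reachable a v)
      = (phyloLeaves G).filter (fun v => (G.deleteEdges {I.1}).Reachable b v) := by
    ext v
    simp only [Finset.mem_filter, and_congr_right_iff]
    intro hv
    constructor
    · intro hna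
      rcases htwo v with h | h
      · exact absurd h.symm hna
      · exact h.symm
    · intro hbv hav
      exact hbr (hav.trans hbv.symm)
  have hcBb : splitC G b I.1 = cB := by
    rw [hcB]
    unfold splitC splitF
    rw [← hBset]
  -- split values for leaves on each side
  have hsideA : ∀ j ∈ A, splitC G j I.1 = cA ∧ splitF G j I.1 = cB := by
    intro j hj
    rw [Finset.mem_filter] at hj
    have h1 : splitC G j I.1 = cA := splitC_eq_of_reach hj.2
    have h2 := splitC_add_splitF (G := G) j I.1
    exact ⟨h1, by omega⟩
  have hsideB : ∀ j ∈ phyloLeaves G, j ∉ A → splitC G j I.1 = cB ∧ splitF G j I.1 = cA := by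
    intro j hj hjA
    have hna : ¬ (G.deleteEdges {I.1}).Reachable a j := by
      intro h
      exact hjA (Finset.mem_filter.mpr ⟨hj, h⟩)
    have hbj : (G.deleteEdges {I.1}).Reachable b j := by
      rcases htwo j with h | h
      · exact absurd h.symm hna
      · exact h.symm
    have h1 : splitC G j I.1 = cB := by rw [splitC_eq_of_reach hbj, hcBb]
    have h2 := splitC_add_splitF (G := G) j I.1
    exact ⟨h1, by omega⟩
  -- sum of x over pendant edges of all leaves
  have hS : ∑ j ∈ phyloLeaves G, x (pe j) = -1 := by
    rw [← Finset.sum_filter_add_sum_filter_not (phyloLeaves G)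
      (fun v => (G.deleteEdges {I.1}).Reachable a v) (fun j => x (pe j))]
    have e1 : ∀ j ∈ A, x (pe j) = -(((cB:ℝ) - 1) / (((n:ℝ) - 2) * (cA:ℝ))) := by
      intro j hj
      have hjl : G.degree j = 1 := mem_phyloLeaves.mp (Finset.mem_filter.mp hj).1
      obtain ⟨h1, h2⟩ := hsideA j hj
      rw [hx j hjl, h1, h2]
    have e2 : ∀ j ∈ (phyloLeaves G).filter
        (fun v => ¬ (G.deleteEdges {I.1}).Reachable a v),
        x (pe j) = -(((cA:ℝ) - 1) / (((n:ℝ) - 2) * (cB:ℝ))) := by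
      intro j hj
      rw [Finset.mem_filter] at hj
      have hjl : G.degree j = 1 := mem_phyloLeaves.mp hj.1
      have hjA : j ∉ A := by
        rw [hA_def]
        simp only [Finset.mem_filter]
        tauto
      obtain ⟨h1, h2⟩ := hsideB j hj.1 hjA
      rw [hx j hjl, h1, h2]
    rw [show ((phyloLeaves G).filter (fun v => (G.deleteEdges {I.1}).Reachable a v)) = A from rfl]
    rw [Finset.sum_congr rfl e1, Finset.sum_congr rfl e2, Finset.sum_const, Finset.sum_const]
    have hcardB : ((phyloLeaves G).filter
        (fun v => ¬ (G.deleteEdges {I.1}).Reachable a v)).card = cB := rfl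
    rw [hcA_def, hcardB]
    rw [nsmul_eq_mul, nsmul_eq_mul]
    have h1 : (cA:ℝ) ≠ 0 := Nat.cast_ne_zero.mpr (by omega)
    have h2 : (cB:ℝ) ≠ 0 := Nat.cast_ne_zero.mpr (by omega)
    have h4 : (cA:ℝ) + (cB:ℝ) = (n:ℝ) := by exact_mod_cast congrArg (Nat.cast (R := ℝ)) hcacb
    have h3 : (n:ℝ) - 2 ≠ 0 := by
      have : (4:ℝ) ≤ (n:ℝ) := by exact_mod_cast hn
      intro h
      have : (n:ℝ) = 2 := by linarith
      linarith
    have := arithS (cA:ℝ) (cB:ℝ) (n:ℝ) h1 h2 h4 h3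
    calc (cA:ℝ) * -(((cB:ℝ) - 1) / (((n:ℝ) - 2) * (cA:ℝ)))
          + (cB:ℝ) * -(((cA:ℝ) - 1) / (((n:ℝ) - 2) * (cB:ℝ)))
        = (cA:ℝ) * (-((cB:ℝ)-1)/(((n:ℝ)-2)*(cA:ℝ)))
          + (cB:ℝ) * (-((cA:ℝ)-1)/(((n:ℝ)-2)*(cB:ℝ))) := by ring
      _ = -1 := this
  -- the row
  funext i
  obtain ⟨i0, hi0⟩ := i
  show (∑ k : PEdge G, shapleyMatrix G ⟨i0, hi0⟩ k * x k) = 0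
  have hi0mem : i0 ∈ phyloLeaves G := mem_phyloLeaves.mpr hi0
  have hn3 : 3 ≤ (phyloLeaves G).card := by omega
  -- split the sum into pendant and internal edges
  rw [← Finset.sum_filter_add_sum_filter_not Finset.univ
    (fun k : PEdge G => ∃ v ∈ k.1, G.degree v = 1)
    (fun k => shapleyMatrix G ⟨i0, hi0⟩ k * x k)]
  -- internal part
  have hint : ∑ k ∈ Finset.univ.filter (fun k : PEdge G => ¬ ∃ v ∈ k.1, G.degree v = 1),
      shapleyMatrix G ⟨i0, hi0⟩ k * x k = shapleyMatrix G ⟨i0, hi0⟩ I * x I := by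
    apply Finset.sum_eq_single_of_mem
    · simp only [Finset.mem_filter, Finset.mem_univ, true_and]
      push_neg
      exact hI
    · intro k hk hkne
      rw [Finset.mem_filter] at hk
      have hk2 := hk.2
      push_neg at hk2
      rw [hother k hkne hk2, mul_zero]
  rw [hint]
  -- pendant part as a sum over leaves
  have hbij : ∑ k ∈ Finset.univ.filter (fun k : PEdge G => ∃ v ∈ k.1, G.degree v = 1),
      shapleyMatrix G ⟨i0, hi0⟩ k * x k
      = ∑ j ∈ phyloLeaves G, shapleyMatrix G ⟨i0, hi0⟩ (pe j) * x (pe j) := by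
    symm
    apply Finset.sum_bij' (i := fun j _ => pe j) (j := fun k _ => lf k)
    · intro j hj
      have hjl := mem_phyloLeaves.mp hj
      simp only [Finset.mem_filter, Finset.mem_univ, true_and]
      exact ⟨j, hjpe j hjl, hjl⟩
    · intro k hk
      simp only [Finset.mem_filter, Finset.mem_univ, true_and] at hk
      exact mem_phyloLeaves.mpr (hlf k hk).2
    · intro j hj
      have hjl := mem_phyloLeaves.mp hj
      have hlf2 := hlf (pe j) ⟨j, hjpe j hjl, hjl⟩
      have hmem := hlf2.1
      rw [hpe1 j hjl hjl, Sym2.mem_iff] at hmem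
      rcases hmem with h | h
      · exact h
      · exfalso
        exact not_both hconn hn3 (hnbr j hjl) hjl (h ▸ hlf2.2)
    · intro k hk
      simp only [Finset.mem_filter, Finset.mem_univ, true_and] at hk
      have hlf2 := hlf k hk
      exact (hpe_unique (lf k) hlf2.2 k hlf2.1).symm
    · intro j hj
      rfl
  rw [hbij]
  -- compute the pendant sum
  set X := x (pe i0) with hX_def
  have hps : ∑ j ∈ phyloLeaves G, shapleyMatrix G ⟨i0, hi0⟩ (pe j) * x (pe j)
      = ((n:ℝ) - 1)/(n:ℝ) * X
        + 1/((n:ℝ)*((n:ℝ) - 1)) * ((∑ j ∈ phyloLeaves G, x (pe j)) - X) := by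
    rw [← Finset.add_sum_erase _ _ hi0mem]
    have hterm : ∀ j ∈ (phyloLeaves G).erase i0,
        shapleyMatrix G ⟨i0, hi0⟩ (pe j) * x (pe j)
        = 1/((n:ℝ)*((n:ℝ) - 1)) * x (pe j) := by
      intro j hj
      rw [Finset.mem_erase] at hj
      have hjl := mem_phyloLeaves.mp hj.2
      have h1 : splitF G i0 (pe j).1 = 1 := by
        rw [hpe1 j hjl hjl]
        exact splitF_pendant_other hT hjl (hnbr j hjl) hi0 (fun h => hj.1 h.symm)
      have h2 : splitC G i0 (pe j).1 = n - 1 := by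
        have := splitC_add_splitF (G := G) i0 (pe j).1
        omega
      show (splitF G i0 (pe j).1 : ℝ) / (((phyloLeaves G).card : ℝ) * (splitC G i0 (pe j).1 : ℝ))
          * x (pe j) = _
      rw [h1, h2, ← hn_def, Nat.cast_sub (by omega : 1 ≤ n), Nat.cast_one]
    rw [Finset.sum_congr rfl hterm, ← Finset.mul_sum]
    have herase : ∑ j ∈ (phyloLeaves G).erase i0, x (pe j)
        = (∑ j ∈ phyloLeaves G, x (pe j)) - X := by
      have := Finset.add_sum_erase (phyloLeaves G) (fun j => x (pe j)) hi0mem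
      rw [hX_def]
      linarith
    rw [herase]
    congr 1
    have h1 : splitC G i0 (pe i0).1 = 1 := by
      rw [hpe1 i0 hi0 hi0]
      exact splitC_pendant_self hi0 (hnbr i0 hi0)
    have h2 : splitF G i0 (pe i0).1 = n - 1 := by
      have := splitC_add_splitF (G := G) i0 (pe i0).1
      omega
    show (splitF G i0 (pe i0).1 : ℝ) / (((phyloLeaves G).card : ℝ) * (splitC G i0 (pe i0).1 : ℝ))
        * X = _
    rw [h1, h2, ← hn_def, Nat.cast_sub (by omega : 1 ≤ n), Nat.cast_one, mul_one]
  rw [hps, hS]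
  -- final arithmetic
  have hXval : X = -(((splitF G i0 I.1 : ℝ) - 1) /
      (((n:ℝ) - 2) * (splitC G i0 I.1 : ℝ))) := hx i0 hi0
  have hMI : shapleyMatrix G ⟨i0, hi0⟩ I
      = (splitF G i0 I.1 : ℝ) / ((n:ℝ) * (splitC G i0 I.1 : ℝ)) := by
    show (splitF G i0 I.1 : ℝ) / (((phyloLeaves G).card : ℝ) * (splitC G i0 I.1 : ℝ)) = _
    rw [← hn_def]
  rw [hXval, hMI, hself, mul_one]
  have hcf := splitC_add_splitF (G := G) i0 I.1
  have hcI1 : 1 ≤ splitC G i0 I.1 :=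
    Finset.card_pos.mpr ⟨i0, Finset.mem_filter.mpr ⟨hi0mem, SimpleGraph.Reachable.refl _⟩⟩
  have hc0 : (splitC G i0 I.1 : ℝ) ≠ 0 := Nat.cast_ne_zero.mpr (by omega)
  have hN4 : (4:ℝ) ≤ (n:ℝ) := by exact_mod_cast hn
  have hcfR : (splitC G i0 I.1 : ℝ) + (splitF G i0 I.1 : ℝ) = (n:ℝ) := by
    exact_mod_cast congrArg (Nat.cast (R := ℝ)) hcf
  have := arith (n:ℝ) (splitC G i0 I.1 : ℝ) (splitF G i0 I.1 : ℝ) hc0 hN4 hcfR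
  set c := (splitC G i0 I.1 : ℝ)
  set f := (splitF G i0 I.1 : ℝ)
  linear_combination this
end
end

section
/- Let T be an unrooted binary phylogenetic tree with leaf set X, |X| = n, and strictly positive edge weights w : E(T) → ℝ_{>0}. For 1 ≤ k ≤ n let pd_k = max{ PD(W) : W ⊆ X, |W| = k }. Let 2 ≤ k ≤ n and let x_1,…,x_k be distinct leaves such that PD({x_1, x_2}) = max{ PD({a,b}) : a, b ∈ X, a ≠ b } and, for each j with 2 ≤ j ≤ k−1, PD({x_1,…,x_j, x_{j+1}}) = max{ PD({x_1,…,x_j} ∪ {x}) : x ∈ X \ {x_1,…,x_j} }. Then PD({x_1,…,x_k}) = pd_k; moreover, every W ⊆ X with |W| = k and PD(W) = pd_k arises in this way, i.e., W can be ordered as such a greedy sequence. -/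
open Finset

noncomputable section
open scoped Classical

/-- `pdMax G w k` is `pd_k`, the largest phylogenetic diversity achieved by a set of `k`
leaves. -/
def pdMax {V : Type*} [Fintype V] (G : SimpleGraph V) (w : Sym2 V → ℝ) (k : ℕ) : ℝ :=
  sSup (PD G w '' {W : Finset V | W ⊆ phyloLeaves G ∧ W.card = k})

/-- `x 0, x 1, …, x (k-1)` is a greedy sequence of `k` distinct leaves: the first two leaves
are a pair of maximal `PD`-distance, and each subsequent leaf maximizes the increase in
`PD` among all remaining leaves. -/
def IsGreedySeq {V : Type*} [Fintype V] (G : SimpleGraph V) (w : Sym2 V → ℝ) (k : ℕ)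
    (x : ℕ → V) : Prop :=
  (∀ j < k, x j ∈ phyloLeaves G) ∧
  (∀ j1 < k, ∀ j2 < k, x j1 = x j2 → j1 = j2) ∧
  (∀ a ∈ phyloLeaves G, ∀ b ∈ phyloLeaves G, a ≠ b →
    PD G w {a, b} ≤ PD G w {x 0, x 1}) ∧
  (∀ j, 2 ≤ j → j < k → ∀ y ∈ phyloLeaves G, y ∉ (Finset.range j).image x →
    PD G w (insert y ((Finset.range j).image x))
      ≤ PD G w (insert (x j) ((Finset.range j).image x)))

set_option linter.unusedSectionVars false

namespace SteelAux

variable {V : Type*} [Fintype V] (G : SimpleGraph V)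

/-- Reachable in `G` minus the edge `e`. -/
abbrev Rq (e : Sym2 V) (u v : V) : Prop := (G.deleteEdges {e}).Reachable u v

/-- `S` spans the edge `e`. -/
abbrev Sp (e : Sym2 V) (S : Finset V) : Prop := ∃ a ∈ S, ∃ b ∈ S, ¬ Rq G e a b

lemma PD_unfold {w : Sym2 V → ℝ} {S : Finset V} :
    PD G w S = ∑ e ∈ G.edgeFinset, if Sp G e S then w e else 0 := rfl

lemma sp_mono {e : Sym2 V} {S T : Finset V} (h : S ⊆ T) : Sp G e S → Sp G e T :=
  fun ⟨a, ha, b, hb, hab⟩ => ⟨a, h ha, b, h hb, hab⟩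

lemma walk_two_class {x1 x2 u v : V} (p : G.Walk u v) :
    Rq G s(x1, x2) u v ∨ Rq G s(x1, x2) u x1 ∨ Rq G s(x1, x2) u x2 := by
  induction p with
  | nil => exact Or.inl (.refl _)
  | @cons a b c hab p ih =>
    by_cases hE : s(a, b) = s(x1, x2)
    · rcases Sym2.eq_iff.mp hE with ⟨rfl, rfl⟩ | ⟨rfl, rfl⟩
      · exact Or.inr (Or.inl (.refl _))
      · exact Or.inr (Or.inr (.refl _))
    · have hadj : (G.deleteEdges {s(x1, x2)}).Adj a b := by
        rw [SimpleGraph.deleteEdges_adj]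
        exact ⟨hab, by simpa using hE⟩
      have h1 : Rq G s(x1, x2) a b := hadj.reachable
      rcases ih with h | h | h
      · exact Or.inl (h1.trans h)
      · exact Or.inr (Or.inl (h1.trans h))
      · exact Or.inr (Or.inr (h1.trans h))

lemma reach_endpoint (hc : G.Connected) {x1 x2 : V} (u : V) :
    Rq G s(x1, x2) u x1 ∨ Rq G s(x1, x2) u x2 := by
  obtain ⟨p⟩ := hc.preconnected u x1
  rcases walk_two_class G p with h | h | h
  · exact Or.inl h
  · exact Or.inl h
  · exact Or.inr h

/-- deleting one edge leaves at most two reachability classes -/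
lemma two_class (hc : G.Connected) {e : Sym2 V} {u v w : V}
    (h1 : ¬ Rq G e u v) (h2 : ¬ Rq G e u w) : Rq G e v w := by
  induction e using Sym2.ind with
  | _ x1 x2 =>
    rcases reach_endpoint G hc (x1 := x1) (x2 := x2) u with hu | hu
    · rcases reach_endpoint G hc (x1 := x1) (x2 := x2) v with hv | hv
      · exact absurd (hu.trans hv.symm) h1
      · rcases reach_endpoint G hc (x1 := x1) (x2 := x2) w with hw | hw
        · exact absurd (hu.trans hw.symm) h2
        · exact hv.trans hw.symm
    · rcases reach_endpoint G hc (x1 := x1) (x2 := x2) v with hv | hv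
      · rcases reach_endpoint G hc (x1 := x1) (x2 := x2) w with hw | hw
        · exact hv.trans hw.symm
        · exact absurd (hu.trans hw.symm) h2
      · exact absurd (hu.trans hv.symm) h1

/-- a walk in `G - f` starting in a class not containing `x1, x2` avoids the edge
`s(x1,x2)`, hence witnesses reachability in `G - s(x1,x2)`. -/
lemma avoid {f : Sym2 V} {x1 x2 u v : V} (p : (G.deleteEdges {f}).Walk u v)
    (h1 : ¬ Rq G f u x1) (h2 : ¬ Rq G f u x2) : Rq G s(x1, x2) u v := by
  induction p with
  | nil => exact .refl _
  | @cons a b c hab p ih =>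
    have haG : G.Adj a b ∧ s(a, b) ∉ ({f} : Set (Sym2 V)) :=
      SimpleGraph.deleteEdges_adj.mp hab
    have hrqf : Rq G f a b := hab.reachable
    by_cases hE : s(a, b) = s(x1, x2)
    · exfalso
      rcases Sym2.eq_iff.mp hE with ⟨rfl, rfl⟩ | ⟨rfl, rfl⟩
      · exact h1 (.refl _)
      · exact h2 (.refl _)
    · have hadj : (G.deleteEdges {s(x1, x2)}).Adj a b := by
        rw [SimpleGraph.deleteEdges_adj]
        exact ⟨haG.1, by simpa using hE⟩
      exact hadj.reachable.trans
        (ih (fun hr => h1 (hrqf.trans hr)) (fun hr => h2 (hrqf.trans hr)))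

lemma bad_of_lost {e : Sym2 V} {B : Finset V} {b : V} (hb : b ∈ B)
    (hB : Sp G e B) (hEr : ¬ Sp G e (B.erase b)) :
    ∀ c ∈ B, c ≠ b → ¬ Rq G e b c := by
  intro c hc hcb hbc
  obtain ⟨p, hp, q, hq, hpq⟩ := hB
  by_cases hpb : p = b
  · subst hpb
    have hqb : q ≠ p := fun h => hpq (h ▸ SimpleGraph.Reachable.refl _)
    exact hEr ⟨c, Finset.mem_erase.mpr ⟨hcb, hc⟩, q, Finset.mem_erase.mpr ⟨hqb, hq⟩,
      fun hcq => hpq (hbc.trans hcq)⟩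
  · by_cases hqb : q = b
    · subst hqb
      exact hEr ⟨p, Finset.mem_erase.mpr ⟨hpb, hp⟩, c, Finset.mem_erase.mpr ⟨hcb, hc⟩,
        fun hpc => hpq (hpc.trans hbc.symm)⟩
    · exact hEr ⟨p, Finset.mem_erase.mpr ⟨hpb, hp⟩, q, Finset.mem_erase.mpr ⟨hqb, hq⟩, hpq⟩


lemma exc (hc : G.Connected) (w : Sym2 V → ℝ) (hw : ∀ e ∈ G.edgeSet, 0 < w e)
    {A B : Finset V} (hA2 : 2 ≤ A.card) (hAB : A.card < B.card) :
    ∃ b ∈ B, b ∉ A ∧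
      PD G w A + PD G w B ≤ PD G w (insert b A) + PD G w (B.erase b) := by
  have hsel : ∃ b ∈ B, b ∉ A ∧ ∀ e ∈ G.edgeFinset,
      (∀ c ∈ B, c ≠ b → ¬ Rq G e b c) → ∀ a ∈ A, ¬ Rq G e b a := by
    by_contra hcon
    push_neg at hcon
    have h' : ∀ b : V, ∃ p : Sym2 V × V, b ∈ B \ A →
        p.1 ∈ G.edgeFinset ∧ (∀ c ∈ B, c ≠ b → ¬ Rq G p.1 b c) ∧
          p.2 ∈ A ∧ Rq G p.1 b p.2 := by
      intro b
      by_cases hb : b ∈ B \ A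
      · obtain ⟨hbB, hbA⟩ := Finset.mem_sdiff.mp hb
        obtain ⟨e, he, hbad, a, ha, hra⟩ := hcon b hbB hbA
        exact ⟨(e, a), fun _ => ⟨he, hbad, ha, hra⟩⟩
      · exact ⟨(s(b, b), b), fun h => absurd h hb⟩
    choose F hF using h'
    have hmaps : ∀ b ∈ B \ A, (F b).2 ∈ A \ B := by
      intro b hb
      obtain ⟨he, hbad, ha, hra⟩ := hF b hb
      refine Finset.mem_sdiff.mpr ⟨ha, fun haB => ?_⟩
      have hne : (F b).2 ≠ b := fun h => (Finset.mem_sdiff.mp hb).2 (h ▸ ha)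
      exact hbad _ haB hne hra
    have hcard : (A \ B).card < (B \ A).card := by
      have h1 := Finset.card_sdiff_add_card_inter A B
      have h2 := Finset.card_sdiff_add_card_inter B A
      rw [Finset.inter_comm] at h2
      omega
    obtain ⟨b, hb, b', hb', hbb', heq⟩ :=
      Finset.exists_ne_map_eq_of_card_lt_of_maps_to hcard hmaps
    obtain ⟨heB, hbadb, haA, hrab⟩ := hF b hb
    obtain ⟨heB', hbadb', haA', hrab'⟩ := hF b' hb'
    have hbB := (Finset.mem_sdiff.mp hb).1
    have hb'B := (Finset.mem_sdiff.mp hb').1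
    have hra' : Rq G (F b').1 b' (F b).2 := heq ▸ hrab'
    have hB3 : 3 ≤ B.card := by omega
    have hb'mem : b' ∈ B.erase b := Finset.mem_erase.mpr ⟨Ne.symm hbb', hb'B⟩
    have hpos : 0 < ((B.erase b).erase b').card := by
      rw [Finset.card_erase_of_mem hb'mem, Finset.card_erase_of_mem hbB]
      omega
    obtain ⟨b'', hbm⟩ := Finset.card_pos.mp hpos
    have hb''b' : b'' ≠ b' := (Finset.mem_erase.mp hbm).1
    have hb''b : b'' ≠ b := (Finset.mem_erase.mp (Finset.mem_erase.mp hbm).2).1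
    have hb''B : b'' ∈ B := (Finset.mem_erase.mp (Finset.mem_erase.mp hbm).2).2
    by_cases hef : (F b).1 = (F b').1
    · have hbb : Rq G (F b).1 b b' := hrab.trans (hef ▸ hra').symm
      exact hbadb b' hb'B (Ne.symm hbb') hbb
    · have heS : (F b).1 ∈ G.edgeSet := SimpleGraph.mem_edgeFinset.mp heB
      obtain ⟨x1, x2, hx⟩ : ∃ x1 x2, (F b).1 = s(x1, x2) := by
        induction (F b).1 using Sym2.ind with
        | _ x y => exact ⟨x, y, rfl⟩
      have hadj12 : Rq G (F b').1 x1 x2 := by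
        refine SimpleGraph.Adj.reachable ?_
        rw [SimpleGraph.deleteEdges_adj]
        constructor
        · rw [hx, SimpleGraph.mem_edgeSet] at heS; exact heS
        · simpa using (hx ▸ hef)
      by_cases hcase : Rq G (F b').1 x1 b'
      · -- then b, b'' are on the far side of f from x1, x2
        have h1 : ¬ Rq G (F b').1 b' b := hbadb' b hbB hbb'
        have h2 : ¬ Rq G (F b').1 b' b'' := hbadb' b'' hb''B hb''b'
        have h3 : Rq G (F b').1 b b'' := two_class G hc h1 h2
        have h4 : ¬ Rq G (F b').1 b x1 := fun h => h1 (hcase.symm.trans h.symm)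
        have h5 : ¬ Rq G (F b').1 b x2 := fun h => h4 (h.trans hadj12.symm)
        obtain ⟨p⟩ := h3
        have h6 : Rq G s(x1, x2) b b'' := avoid G p h4 h5
        exact hbadb b'' hb''B hb''b (hx ▸ h6)
      · -- a, b' on the far side of f from x1, x2
        have h4 : ¬ Rq G (F b').1 (F b).2 x1 := fun h => hcase (h.symm.trans hra'.symm)
        have h5 : ¬ Rq G (F b').1 (F b).2 x2 := fun h => h4 (h.trans hadj12.symm)
        obtain ⟨p⟩ := hra'.symm
        have h6 : Rq G s(x1, x2) (F b).2 b' := avoid G p h4 h5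
        have h7 : Rq G (F b).1 b b' := hrab.trans (hx ▸ h6)
        exact hbadb b' hb'B (Ne.symm hbb') h7
  obtain ⟨b, hbB, hbA, hgood⟩ := hsel
  refine ⟨b, hbB, hbA, ?_⟩
  have hAne : A.Nonempty := Finset.card_pos.mp (by omega)
  rw [PD_unfold G, PD_unfold G, PD_unfold G, PD_unfold G,
    ← Finset.sum_add_distrib, ← Finset.sum_add_distrib]
  apply Finset.sum_le_sum
  intro e heF
  have heS := SimpleGraph.mem_edgeFinset.mp heF
  have hwpos := hw e heS
  have hmono : (if Sp G e A then w e else 0) ≤ (if Sp G e (insert b A) then w e else 0) := by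
    by_cases hA : Sp G e A
    · rw [if_pos hA, if_pos (sp_mono G (Finset.subset_insert b A) hA)]
    · rw [if_neg hA]
      split_ifs
      · exact hwpos.le
      · exact le_rfl
  by_cases hB : Sp G e B
  · by_cases hEr : Sp G e (B.erase b)
    · rw [if_pos hB, if_pos hEr]
      linarith
    · have hbad := bad_of_lost G hbB hB hEr
      have hnA : ∀ a' ∈ A, ¬ Rq G e b a' := hgood e heF hbad
      have hnotA : ¬ Sp G e A := by
        rintro ⟨p, hp, q, hq, hpq⟩
        exact hpq (two_class G hc (hnA p hp) (hnA q hq))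
      have hins : Sp G e (insert b A) := by
        obtain ⟨a0, ha0⟩ := hAne
        exact ⟨b, Finset.mem_insert_self _ _, a0, Finset.mem_insert_of_mem ha0, hnA a0 ha0⟩
      rw [if_pos hB, if_neg hEr, if_neg hnotA, if_pos hins]
      linarith
  · have hEr : ¬ Sp G e (B.erase b) := fun h => hB (sp_mono G (Finset.erase_subset _ _) h)
    rw [if_neg hB, if_neg hEr]
    linarith

lemma pdMax_spec (w : Sym2 V → ℝ) {j : ℕ} (hj : j ≤ (phyloLeaves G).card) :
    (∃ W : Finset V, W ⊆ phyloLeaves G ∧ W.card = j ∧ PD G w W = pdMax G w j) ∧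
    (∀ W : Finset V, W ⊆ phyloLeaves G → W.card = j → PD G w W ≤ pdMax G w j) := by
  have hfin : (PD G w '' {W : Finset V | W ⊆ phyloLeaves G ∧ W.card = j}).Finite :=
    (Set.toFinite _).image _
  have hne : (PD G w '' {W : Finset V | W ⊆ phyloLeaves G ∧ W.card = j}).Nonempty := by
    obtain ⟨W, hWsub, hWcard⟩ := Finset.exists_subset_card_eq hj
    exact ⟨PD G w W, ⟨W, ⟨hWsub, hWcard⟩, rfl⟩⟩
  constructor
  · obtain ⟨W, ⟨h1, h2⟩, h3⟩ := hne.csSup_mem hfin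
    exact ⟨W, h1, h2, h3⟩
  · intro W h1 h2
    exact le_csSup hfin.bddAbove ⟨W, ⟨h1, h2⟩, rfl⟩

lemma gstep (hc : G.Connected) (w : Sym2 V → ℝ) (hw : ∀ e ∈ G.edgeSet, 0 < w e)
    {A : Finset V} {j : ℕ} (hA : A ⊆ phyloLeaves G) (hcard : A.card = j)
    (hj2 : 2 ≤ j) (hjn : j < (phyloLeaves G).card)
    (hopt : PD G w A = pdMax G w j) {y : V} (hy : y ∈ phyloLeaves G) (hyA : y ∉ A)
    (hmax : ∀ z ∈ phyloLeaves G, z ∉ A → PD G w (insert z A) ≤ PD G w (insert y A)) :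
    PD G w (insert y A) = pdMax G w (j + 1) := by
  obtain ⟨⟨B, hBsub, hBcard, hBopt⟩, hub⟩ := pdMax_spec G w (show j + 1 ≤ _ from hjn)
  obtain ⟨b, hbB, hbA, hineq⟩ := exc G hc w hw (A := A) (B := B)
    (by omega) (by omega)
  have h1 : PD G w (B.erase b) ≤ pdMax G w j :=
    (pdMax_spec G w (le_of_lt hjn)).2 _ ((Finset.erase_subset _ _).trans hBsub)
      (by rw [Finset.card_erase_of_mem hbB, hBcard]; omega)
  have h2 : PD G w (insert b A) ≤ PD G w (insert y A) := hmax b (hBsub hbB) hbA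
  have h3 : PD G w (insert y A) ≤ pdMax G w (j + 1) := by
    apply hub
    · exact Finset.insert_subset hy hA
    · rw [Finset.card_insert_of_notMem hyA, hcard]
  have h4 : pdMax G w (j + 1) ≤ PD G w (insert y A) := by
    rw [← hBopt]
    linarith
  linarith

lemma dstep (hc : G.Connected) (w : Sym2 V → ℝ) (hw : ∀ e ∈ G.edgeSet, 0 < w e)
    {W : Finset V} {j : ℕ} (hW : W ⊆ phyloLeaves G) (hcard : W.card = j + 1)
    (hj2 : 2 ≤ j) (hjn : j + 1 ≤ (phyloLeaves G).card)
    (hopt : PD G w W = pdMax G w (j + 1)) :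
    ∃ b ∈ W, PD G w (W.erase b) = pdMax G w j := by
  obtain ⟨⟨A, hAsub, hAcard, hAopt⟩, hub⟩ := pdMax_spec G w (show j ≤ _ by omega)
  obtain ⟨b, hbW, hbA, hineq⟩ := exc G hc w hw (A := A) (B := W) (by omega) (by omega)
  have h1 : PD G w (insert b A) ≤ pdMax G w (j + 1) := by
    apply (pdMax_spec G w hjn).2
    · exact Finset.insert_subset (hW hbW) hAsub
    · rw [Finset.card_insert_of_notMem hbA, hAcard]
  have h2 : PD G w (W.erase b) ≤ pdMax G w j := by
    apply hub
    · exact (Finset.erase_subset _ _).trans hW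
    · rw [Finset.card_erase_of_mem hbW, hcard]; omega
  exact ⟨b, hbW, by linarith⟩

end SteelAux

/-- (Steel 2005, greedy algorithm.) In a phylogenetic tree with strictly
positive edge weights, for `2 ≤ k ≤ n` every greedy sequence of `k` leaves realizes the
maximum diversity `pd_k`, and conversely every `k`-set of leaves of maximal diversity can be
ordered as a greedy sequence. -/
theorem greedy_solves_pd_optimization {V : Type*} [Fintype V] (G : SimpleGraph V)
    (hT : G.IsTree) (hdeg : ∀ v, G.degree v = 1 ∨ G.degree v = 3)
    (w : Sym2 V → ℝ) (hw : ∀ e ∈ G.edgeSet, 0 < w e)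
    (k : ℕ) (hk2 : 2 ≤ k) (hkn : k ≤ (phyloLeaves G).card) :
    (∀ x : ℕ → V, IsGreedySeq G w k x →
      PD G w ((Finset.range k).image x) = pdMax G w k) ∧
    (∀ W : Finset V, W ⊆ phyloLeaves G → W.card = k → PD G w W = pdMax G w k →
      ∃ x : ℕ → V, IsGreedySeq G w k x ∧ (Finset.range k).image x = W) := by
  have hc : G.Connected := hT.isConnected
  constructor
  · -- forward direction
    intro x hx
    obtain ⟨hmem, hinj, hpair, hstep⟩ := hx
    have himcard : ∀ j ≤ k, ((Finset.range j).image x).card = j := by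
      intro j hj
      rw [Finset.card_image_of_injOn, Finset.card_range]
      intro a ha b hb hab
      exact hinj a (lt_of_lt_of_le (Finset.mem_range.mp ha) hj) b
        (lt_of_lt_of_le (Finset.mem_range.mp hb) hj) hab
    have himsub : ∀ j ≤ k, (Finset.range j).image x ⊆ phyloLeaves G := by
      intro j hj v hv
      obtain ⟨i, hi, rfl⟩ := Finset.mem_image.mp hv
      exact hmem i (lt_of_lt_of_le (Finset.mem_range.mp hi) hj)
    have main : ∀ j, 2 ≤ j → j ≤ k → PD G w ((Finset.range j).image x) = pdMax G w j := by
      intro j hj2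
      induction j, hj2 using Nat.le_induction with
      | base =>
        intro _
        have h01 : x 0 ≠ x 1 := by
          intro h
          simpa using hinj 0 (by omega) 1 (by omega) h
        have him2 : (Finset.range 2).image x = {x 0, x 1} := by
          rw [show (2 : ℕ) = 1 + 1 from rfl, Finset.range_add_one, Finset.range_one,
            Finset.image_insert, Finset.image_singleton, Finset.pair_comm]
        obtain ⟨⟨W, hWsub, hWcard, hWopt⟩, hub⟩ :=
          SteelAux.pdMax_spec G w (le_trans hk2 hkn)
        obtain ⟨a, b, hab, rfl⟩ := Finset.card_eq_two.mp hWcard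
        have haL : a ∈ phyloLeaves G := hWsub (by simp)
        have hbL : b ∈ phyloLeaves G := hWsub (by simp)
        rw [him2]
        apply le_antisymm
        · apply hub
          · refine Finset.insert_subset (hmem 0 (by omega)) ?_
            simpa using hmem 1 (by omega)
          · exact Finset.card_pair h01
        · rw [← hWopt]
          exact hpair a haL b hbL hab
      | succ j hj ih =>
        intro hjk1
        have hjk : j ≤ k := by omega
        have hopt := ih hjk
        have hyA : x j ∉ (Finset.range j).image x := by
          intro hmemj
          obtain ⟨i, hi, hxi⟩ := Finset.mem_image.mp hmemj
          have hik : i < j := Finset.mem_range.mp hi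
          have := hinj i (by omega) j (by omega) hxi
          omega
        rw [Finset.range_add_one, Finset.image_insert]
        exact SteelAux.gstep G hc w hw (himsub j hjk) (himcard j hjk) hj
          (lt_of_lt_of_le (by omega) hkn) hopt (hmem j (by omega)) hyA
          (hstep j hj (by omega))
    exact main k hk2 le_rfl
  · -- converse direction
    have claim : ∀ j, 2 ≤ j → j ≤ k →
        ∀ W : Finset V, W ⊆ phyloLeaves G → W.card = j → PD G w W = pdMax G w j →
          ∃ x : ℕ → V, IsGreedySeq G w j x ∧ (Finset.range j).image x = W := by
      intro j hj2
      induction j, hj2 using Nat.le_induction with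
      | base =>
        intro _ W hWsub hWcard hWopt
        obtain ⟨a, b, hab, rfl⟩ := Finset.card_eq_two.mp hWcard
        have haL : a ∈ phyloLeaves G := hWsub (by simp)
        have hbL : b ∈ phyloLeaves G := hWsub (by simp)
        refine ⟨fun i => if i = 0 then a else b, ⟨?_, ?_, ?_, ?_⟩, ?_⟩
        · intro i hi
          by_cases h : i = 0 <;> simp [h, haL, hbL]
        · intro j1 h1 j2 h2 heq
          interval_cases j1 <;> interval_cases j2 <;> simp_all
        · intro p hp q hq hpq
          show PD G w {p, q} ≤
            PD G w {(if (0:ℕ) = 0 then a else b), (if (1:ℕ) = 0 then a else b)}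
          have h01 : ({(if (0:ℕ) = 0 then a else b), (if (1:ℕ) = 0 then a else b)} :
              Finset V) = {a, b} := by norm_num
          rw [h01, hWopt]
          apply (SteelAux.pdMax_spec G w (le_trans hk2 hkn)).2
          · exact Finset.insert_subset hp (by simpa using hq)
          · exact Finset.card_pair hpq
        · intro i h2i hi2
          omega
        · rw [show (2 : ℕ) = 1 + 1 from rfl, Finset.range_add_one, Finset.range_one,
            Finset.image_insert, Finset.image_singleton]
          simp [Finset.pair_comm]
      | succ j hj ih =>
        intro hjk W hWsub hWcard hWopt
        have hjn' : j + 1 ≤ (phyloLeaves G).card := le_trans hjk hkn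
        obtain ⟨b, hbW, hbopt⟩ := SteelAux.dstep G hc w hw hWsub hWcard hj hjn' hWopt
        have hW'sub : W.erase b ⊆ phyloLeaves G := (Finset.erase_subset _ _).trans hWsub
        have hW'card : (W.erase b).card = j := by
          rw [Finset.card_erase_of_mem hbW, hWcard]; omega
        obtain ⟨x', hx'g, hx'im⟩ := ih (by omega) (W.erase b) hW'sub hW'card hbopt
        obtain ⟨hm', hi', hp', hs'⟩ := hx'g
        have hbW' : b ∉ W.erase b := Finset.notMem_erase _ _
        set x : ℕ → V := fun i => if i = j then b else x' i with hxdef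
        have hxj : x j = b := if_pos rfl
        have hxo : ∀ m, m ≠ j → x m = x' m := fun m hm => if_neg hm
        have himeq : ∀ i ≤ j, (Finset.range i).image x = (Finset.range i).image x' := by
          intro i hi
          apply Finset.image_congr
          intro m hm
          have : m < i := Finset.mem_range.mp hm
          exact hxo m (by omega)
        refine ⟨x, ⟨?_, ?_, ?_, ?_⟩, ?_⟩
        · intro i hi
          by_cases h : i = j
          · rw [h, hxj]; exact hWsub hbW
          · rw [hxo i h]; exact hm' i (by omega)
        · intro j1 h1 j2 h2 heq
          by_cases e1 : j1 = j <;> by_cases e2 : j2 = j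
          · omega
          · exfalso
            rw [e1, hxj, hxo j2 e2] at heq
            apply hbW'
            rw [← hx'im]
            exact Finset.mem_image.mpr ⟨j2, Finset.mem_range.mpr (by omega), heq.symm⟩
          · exfalso
            rw [e2, hxj, hxo j1 e1] at heq
            apply hbW'
            rw [← hx'im]
            exact Finset.mem_image.mpr ⟨j1, Finset.mem_range.mpr (by omega), heq⟩
          · rw [hxo j1 e1, hxo j2 e2] at heq
            exact hi' j1 (by omega) j2 (by omega) heq
        · rw [hxo 0 (by omega), hxo 1 (by omega)]
          exact hp'
        · intro i h2i hi1 y hy hynot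
          by_cases hij : i < j
          · rw [himeq i (by omega)] at hynot ⊢
            rw [hxo i (by omega)]
            exact hs' i h2i hij y hy hynot
          · have hijeq : i = j := by omega
            subst hijeq
            rw [himeq i le_rfl, hx'im] at hynot ⊢
            have hxj' : x i = b := if_pos rfl
            rw [hxj', Finset.insert_erase hbW]
            by_cases hyb : y = b
            · rw [hyb, Finset.insert_erase hbW]
            · rw [hWopt]
              apply (SteelAux.pdMax_spec G w hjn').2
              · exact Finset.insert_subset hy hW'sub
              · rw [Finset.card_insert_of_notMem hynot, hW'card]
        · rw [Finset.range_add_one, Finset.image_insert, himeq j le_rfl, hx'im]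
          rw [hxj, Finset.insert_erase hbW]
    exact fun W h1 h2 h3 => claim k hk2 le_rfl W h1 h2 h3
end
end

section
/- Let k ≥ 2 and let T_ε be an unrooted binary phylogenetic tree on n = 2k+1 leaves having an edge e whose deletion leaves a component with k leaves (leaf set L1) and a component with k+1 leaves (leaf set L2). For ε > 0, assign weight 1/ε to e, weight ε/(2k−2) to each of the 2k−2 edges on the L1 side, and weight ε/(2k) to each of the 2k edges on the L2 side. Then for every leaf i ∈ L1, the Shapley value satisfies SV_i ≥ (k+1)/(ε·(2k²+k)) + ε/(2k²+k). -/
open Finset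

noncomputable section
open scoped Classical

namespace ShapAux
variable {V : Type*} {G : SimpleGraph V}

lemma bridge_of_acyclic (hA : G.IsAcyclic) {x y : V} (h : G.Adj x y) :
    ¬ (G.deleteEdges {s(x,y)}).Reachable x y := by
  have := (SimpleGraph.isAcyclic_iff_forall_adj_isBridge.mp hA) h
  rw [SimpleGraph.isBridge_iff] at this
  exact this

lemma reach_mem_support_transfer {e1 e2 : Sym2 V} {a z y : V}
    (hr : (G.deleteEdges {e1}).Reachable a z)
    (hy : ¬ (G.deleteEdges {e1}).Reachable a y)
    (hye2 : y ∈ e2) : (G.deleteEdges {e2}).Reachable a z := by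
  obtain ⟨p⟩ := hr
  refine ⟨p.transfer _ ?_⟩
  intro e he
  have heG : e ∈ (G.deleteEdges {e1}).edgeSet := p.edges_subset_edgeSet he
  rw [SimpleGraph.edgeSet_deleteEdges] at heG ⊢
  refine ⟨heG.1, ?_⟩
  simp only [Set.mem_singleton_iff]
  rintro rfl
  obtain ⟨c, rfl⟩ := Sym2.mem_iff_exists.mp hye2
  exact hy ⟨p.takeUntil _ (p.fst_mem_support_of_mem_edges he)⟩

/-- 5a: subset -/
lemma farSubset (hA : G.IsAcyclic) {x y w z : V} (hxy : G.Adj x y) (hyw : G.Adj y w)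
    (hwx : w ≠ x) (hz : (G.deleteEdges {s(y,w)}).Reachable w z) :
    (G.deleteEdges {s(x,y)}).Reachable y z := by
  have hb : ¬ (G.deleteEdges {s(y,w)}).Reachable w y :=
    fun h => bridge_of_acyclic hA hyw h.symm
  have h1 : (G.deleteEdges {s(x,y)}).Reachable w z :=
    reach_mem_support_transfer hz hb (by simp)
  have hadj : (G.deleteEdges {s(x,y)}).Adj y w := by
    simp only [SimpleGraph.deleteEdges_adj, Set.mem_singleton_iff]
    refine ⟨hyw, fun hc => ?_⟩
    rcases Sym2.eq_iff.mp hc with ⟨h1', h2'⟩ | ⟨h1', h2'⟩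
    · exact G.irrefl (h2' ▸ hyw)
    · exact hwx h2'
  exact hadj.reachable.trans h1

/-- 5b: disjointness of two far-sides at y -/
lemma farDisjoint (hA : G.IsAcyclic) {y y1 y2 z : V} (h1 : G.Adj y y1) (h2 : G.Adj y y2)
    (h12 : y1 ≠ y2) (hz1 : (G.deleteEdges {s(y,y1)}).Reachable y1 z)
    (hz2 : (G.deleteEdges {s(y,y2)}).Reachable y2 z) : False := by
  have hb1 : ¬ (G.deleteEdges {s(y,y1)}).Reachable y1 y :=
    fun h => bridge_of_acyclic hA h1 h.symm
  have hb2 : ¬ (G.deleteEdges {s(y,y2)}).Reachable y2 y :=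
    fun h => bridge_of_acyclic hA h2 h.symm
  have hz2' : (G.deleteEdges {s(y,y1)}).Reachable y2 z :=
    reach_mem_support_transfer hz2 hb2 (by simp)
  have hz1' : (G.deleteEdges {s(y,y1)}).Reachable y1 y2 := hz1.trans hz2'.symm
  have hadj : (G.deleteEdges {s(y,y1)}).Adj y y2 := by
    simp only [SimpleGraph.deleteEdges_adj, Set.mem_singleton_iff]
    refine ⟨h2, fun hc => ?_⟩
    rcases Sym2.eq_iff.mp hc with ⟨h1', h2'⟩ | ⟨h1', h2'⟩
    · exact h12 h2'.symm
    · exact G.irrefl (h1' ▸ h1)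
  exact bridge_of_acyclic hA h1 (hadj.reachable.trans hz1'.symm)

/-- 5c: step-down -/
lemma stepDown {x y z : V} (hxy : G.Adj x y) (hzy : z ≠ y)
    (hz : (G.deleteEdges {s(x,y)}).Reachable y z) :
    ∃ w, G.Adj y w ∧ w ≠ x ∧ (G.deleteEdges {s(y,w)}).Reachable w z := by
  obtain ⟨p0⟩ := hz
  set p : (G.deleteEdges {s(x,y)}).Walk y z := p0.toPath.1 with hp
  have hpath : p.IsPath := p0.toPath.2
  cases hq : p with
  | nil => exact absurd rfl hzy.symm
  | @cons _ w _ hadj q =>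
    rw [hq] at hpath
    rw [SimpleGraph.Walk.cons_isPath_iff] at hpath
    simp only [SimpleGraph.deleteEdges_adj, Set.mem_singleton_iff] at hadj
    have hwx : w ≠ x := by
      rintro rfl
      exact hadj.2 (Sym2.eq_swap)
    refine ⟨w, hadj.1, hwx, ?_⟩
    refine ⟨q.transfer _ ?_⟩
    intro e he
    have heG : e ∈ (G.deleteEdges {s(x,y)}).edgeSet := q.edges_subset_edgeSet he
    rw [SimpleGraph.edgeSet_deleteEdges] at heG ⊢
    refine ⟨heG.1, ?_⟩
    simp only [Set.mem_singleton_iff]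
    rintro rfl
    exact hpath.2 (q.fst_mem_support_of_mem_edges he)


/-- dichotomy: after deleting an edge, every vertex is reachable from one endpoint. -/
lemma reach_or (hc : G.Connected) {x y : V} (h : G.Adj x y) (z : V) :
    (G.deleteEdges {s(x,y)}).Reachable x z ∨ (G.deleteEdges {s(x,y)}).Reachable y z := by
  have key : ∀ {a b : V} (_ : G.Walk a b),
      ((G.deleteEdges {s(x,y)}).Reachable x a ∨ (G.deleteEdges {s(x,y)}).Reachable y a) →
      ((G.deleteEdges {s(x,y)}).Reachable x b ∨ (G.deleteEdges {s(x,y)}).Reachable y b) := by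
    intro a b p
    induction p with
    | nil => exact id
    | @cons a c b hac p ih =>
      intro ha
      apply ih
      by_cases hecase : s(a,c) = s(x,y)
      · rcases Sym2.eq_iff.mp hecase with ⟨rfl, rfl⟩ | ⟨rfl, rfl⟩
        · exact Or.inr (SimpleGraph.Reachable.refl _)
        · exact Or.inl (SimpleGraph.Reachable.refl _)
      · have hadj : (G.deleteEdges {s(x,y)}).Adj a c := by
          simp [hac, hecase]
        rcases ha with ha | ha
        · exact Or.inl (ha.trans hadj.reachable)
        · exact Or.inr (ha.trans hadj.reachable)
  obtain ⟨p⟩ := hc.preconnected x z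
  exact key p (Or.inl (SimpleGraph.Reachable.refl _))


lemma ne_of_sym2 {x y a b : V} (hxy : G.Adj x y) (hbx : b ≠ x) (hby : b ≠ y) (hay : a = y) :
    s(a,b) ≠ s(x,y) := by
  subst hay
  intro hc
  rcases Sym2.eq_iff.mp hc with ⟨h1, h2⟩ | ⟨h1, h2⟩
  · exact hby h2
  · exact hbx h2

lemma farside [Fintype V] (hA : G.IsAcyclic) (hdeg : ∀ v, G.degree v = 1 ∨ G.degree v = 3) :
    ∀ (N : ℕ) (x y : V), G.Adj x y →
    (Finset.univ.filter fun z => (G.deleteEdges {s(x,y)}).Reachable y z).card ≤ N →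
    (1 ≤ ((phyloLeaves G).filter fun z => (G.deleteEdges {s(x,y)}).Reachable y z).card ∧
    (G.edgeFinset.filter fun e => ∀ z ∈ e, (G.deleteEdges {s(x,y)}).Reachable y z).card + 2
      = 2 * ((phyloLeaves G).filter fun z => (G.deleteEdges {s(x,y)}).Reachable y z).card) := by
  intro N
  induction N with
  | zero =>
    intro x y hxy hle
    exfalso
    have : y ∈ Finset.univ.filter fun z => (G.deleteEdges {s(x,y)}).Reachable y z := by
      simp [SimpleGraph.Reachable.refl]
    have := Finset.card_pos.mpr ⟨y, this⟩
    omega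
  | succ N ih =>
    intro x y hxy hle
    have hbr : ¬ (G.deleteEdges {s(x,y)}).Reachable y x :=
      fun h => bridge_of_acyclic hA hxy h.symm
    rcases hdeg y with hdy | hdy
    · -- y is a leaf
      have hnb : G.neighborFinset y = {x} := by
        have hc1 : (G.neighborFinset y).card = 1 := by
          rw [SimpleGraph.card_neighborFinset_eq_degree]; exact hdy
        obtain ⟨a, ha⟩ := Finset.card_eq_one.mp hc1
        have hx : x ∈ G.neighborFinset y := by simpa using hxy.symm
        rw [ha] at hx
        rw [Finset.mem_singleton] at hx
        subst hx
        exact ha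
      have honly : ∀ z, (G.deleteEdges {s(x,y)}).Reachable y z → z = y := by
        intro z hz
        by_contra hzy
        obtain ⟨w, hw1, hw2, _⟩ := stepDown hxy hzy hz
        have : w ∈ G.neighborFinset y := by simpa using hw1
        rw [hnb] at this
        simp at this
        exact hw2 this
      have hLf : ((phyloLeaves G).filter fun z => (G.deleteEdges {s(x,y)}).Reachable y z) = {y} := by
        apply Finset.eq_singleton_iff_unique_mem.mpr
        constructor
        · simp only [Finset.mem_filter, phyloLeaves, Finset.mem_univ, true_and]
          exact ⟨hdy, SimpleGraph.Reachable.refl _⟩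
        · intro z hz
          exact honly z (Finset.mem_filter.mp hz).2
      have hEf : (G.edgeFinset.filter fun e => ∀ z ∈ e, (G.deleteEdges {s(x,y)}).Reachable y z) = ∅ := by
        apply Finset.eq_empty_iff_forall_notMem.mpr
        intro e he
        rw [Finset.mem_filter] at he
        obtain ⟨he1, he2⟩ := he
        induction e with
        | _ a b =>
          have ha := honly a (he2 a (by simp))
          have hb := honly b (he2 b (by simp))
          subst ha; subst hb
          rw [SimpleGraph.mem_edgeFinset] at he1
          exact G.irrefl (G.mem_edgeSet.mp he1)
      rw [hLf, hEf]
      simp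
    · -- y has degree 3
      have hxmem : x ∈ G.neighborFinset y := by simpa using hxy.symm
      have hcard2 : ((G.neighborFinset y).erase x).card = 2 := by
        rw [Finset.card_erase_of_mem hxmem, SimpleGraph.card_neighborFinset_eq_degree, hdy]
      obtain ⟨y1, y2, h12, herase⟩ := Finset.card_eq_two.mp hcard2
      have hy1 : G.Adj y y1 := by
        have : y1 ∈ (G.neighborFinset y).erase x := by rw [herase]; simp
        simpa using (Finset.mem_of_mem_erase this)
      have hy2 : G.Adj y y2 := by
        have : y2 ∈ (G.neighborFinset y).erase x := by rw [herase]; simp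
        simpa using (Finset.mem_of_mem_erase this)
      have hy1x : y1 ≠ x := by
        have : y1 ∈ (G.neighborFinset y).erase x := by rw [herase]; simp
        exact Finset.ne_of_mem_erase this
      have hy2x : y2 ≠ x := by
        have : y2 ∈ (G.neighborFinset y).erase x := by rw [herase]; simp
        exact Finset.ne_of_mem_erase this
      have hmem12 : ∀ w, G.Adj y w → w ≠ x → w = y1 ∨ w = y2 := by
        intro w hw hwx
        have : w ∈ (G.neighborFinset y).erase x := by
          apply Finset.mem_erase.mpr
          exact ⟨hwx, by simpa using hw⟩
        rw [herase] at this
        simpa using this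
      have hyn1 : ¬ (G.deleteEdges {s(y,y1)}).Reachable y1 y :=
        fun h => bridge_of_acyclic hA hy1 h.symm
      have hyn2 : ¬ (G.deleteEdges {s(y,y2)}).Reachable y2 y :=
        fun h => bridge_of_acyclic hA hy2 h.symm
      -- measure decrease
      have hmeas : ∀ (w : V), G.Adj y w → w ≠ x →
          (Finset.univ.filter fun z => (G.deleteEdges {s(y,w)}).Reachable w z).card ≤ N := by
        intro w hw hwx
        have hsub : (Finset.univ.filter fun z => (G.deleteEdges {s(y,w)}).Reachable w z) ⊆
            ((Finset.univ.filter fun z => (G.deleteEdges {s(x,y)}).Reachable y z).erase y) := by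
          intro z hz
          rw [Finset.mem_filter] at hz
          apply Finset.mem_erase.mpr
          constructor
          · rintro rfl
            exact (fun h => bridge_of_acyclic hA hw h.symm) hz.2
          · rw [Finset.mem_filter]
            exact ⟨Finset.mem_univ _, farSubset hA hxy hw hwx hz.2⟩
        have hcard := Finset.card_le_card hsub
        have hy : y ∈ (Finset.univ.filter fun z => (G.deleteEdges {s(x,y)}).Reachable y z) := by
          simp [SimpleGraph.Reachable.refl]
        have := Finset.card_erase_of_mem hy
        omega
      obtain ⟨hL1, hE1⟩ := ih y y1 hy1 (hmeas y1 hy1 hy1x)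
      obtain ⟨hL2, hE2⟩ := ih y y2 hy2 (hmeas y2 hy2 hy2x)
      -- leaves split
      have hstep : ∀ z, z ≠ y → (G.deleteEdges {s(x,y)}).Reachable y z →
          ((G.deleteEdges {s(y,y1)}).Reachable y1 z ∨ (G.deleteEdges {s(y,y2)}).Reachable y2 z) := by
        intro z hzy hz
        obtain ⟨w, hw1, hw2, hw3⟩ := stepDown hxy hzy hz
        rcases hmem12 w hw1 hw2 with rfl | rfl
        · exact Or.inl hw3
        · exact Or.inr hw3
      have hLsplit : ((phyloLeaves G).filter fun z => (G.deleteEdges {s(x,y)}).Reachable y z)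
          = ((phyloLeaves G).filter fun z => (G.deleteEdges {s(y,y1)}).Reachable y1 z)
          ∪ ((phyloLeaves G).filter fun z => (G.deleteEdges {s(y,y2)}).Reachable y2 z) := by
        ext z
        simp only [Finset.mem_filter, Finset.mem_union]
        constructor
        · rintro ⟨hzl, hzr⟩
          have hzy : z ≠ y := by
            rintro rfl
            simp only [phyloLeaves, Finset.mem_filter] at hzl
            rw [hzl.2] at hdy
            exact absurd hdy (by norm_num)
          rcases hstep z hzy hzr with h | h
          · exact Or.inl ⟨hzl, h⟩
          · exact Or.inr ⟨hzl, h⟩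
        · rintro (⟨hzl, hzr⟩ | ⟨hzl, hzr⟩)
          · exact ⟨hzl, farSubset hA hxy hy1 hy1x hzr⟩
          · exact ⟨hzl, farSubset hA hxy hy2 hy2x hzr⟩
      have hLdisj : Disjoint
          ((phyloLeaves G).filter fun z => (G.deleteEdges {s(y,y1)}).Reachable y1 z)
          ((phyloLeaves G).filter fun z => (G.deleteEdges {s(y,y2)}).Reachable y2 z) := by
        rw [Finset.disjoint_left]
        intro z hz1 hz2
        rw [Finset.mem_filter] at hz1 hz2
        exact farDisjoint hA hy1 hy2 h12 hz1.2 hz2.2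
      have hLcard : ((phyloLeaves G).filter fun z => (G.deleteEdges {s(x,y)}).Reachable y z).card
          = ((phyloLeaves G).filter fun z => (G.deleteEdges {s(y,y1)}).Reachable y1 z).card
          + ((phyloLeaves G).filter fun z => (G.deleteEdges {s(y,y2)}).Reachable y2 z).card := by
        rw [hLsplit, Finset.card_union_of_disjoint hLdisj]
      -- edges split
      have hadjd1 : (G.deleteEdges {s(x,y)}).Adj y y1 := by
        simp only [SimpleGraph.deleteEdges_adj, Set.mem_singleton_iff]
        exact ⟨hy1, ne_of_sym2 hxy hy1x (fun h => G.irrefl (h ▸ hy1)) rfl⟩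
      have hadjd2 : (G.deleteEdges {s(x,y)}).Adj y y2 := by
        simp only [SimpleGraph.deleteEdges_adj, Set.mem_singleton_iff]
        exact ⟨hy2, ne_of_sym2 hxy hy2x (fun h => G.irrefl (h ▸ hy2)) rfl⟩
      have hEsplit : (G.edgeFinset.filter fun e => ∀ z ∈ e, (G.deleteEdges {s(x,y)}).Reachable y z)
          = ({s(y,y1), s(y,y2)} : Finset (Sym2 V))
          ∪ ((G.edgeFinset.filter fun e => ∀ z ∈ e, (G.deleteEdges {s(y,y1)}).Reachable y1 z)
          ∪ (G.edgeFinset.filter fun e => ∀ z ∈ e, (G.deleteEdges {s(y,y2)}).Reachable y2 z)) := by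
        ext e
        simp only [Finset.mem_filter, Finset.mem_union, Finset.mem_insert, Finset.mem_singleton]
        constructor
        · rintro ⟨he1, he2⟩
          induction e with
          | _ a b =>
            have hG : G.Adj a b := G.mem_edgeSet.mp (SimpleGraph.mem_edgeFinset.mp he1)
            by_cases hya : a = y
            · subst hya
              have hbx : b ≠ x := by
                rintro rfl
                exact hbr (he2 b (by simp))
              rcases hmem12 b hG hbx with rfl | rfl
              · exact Or.inl (Or.inl rfl)
              · exact Or.inl (Or.inr rfl)
            · by_cases hyb : b = y
              · subst hyb
                have hax : a ≠ x := by
                  rintro rfl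
                  exact hbr (he2 a (by simp))
                rcases hmem12 a hG.symm hax with rfl | rfl
                · exact Or.inl (Or.inl Sym2.eq_swap)
                · exact Or.inl (Or.inr Sym2.eq_swap)
              · -- neither endpoint is y
                have ha := he2 a (by simp)
                have hb := he2 b (by simp)
                rcases hstep a hya ha with h | h
                · refine Or.inr (Or.inl ⟨he1, ?_⟩)
                  intro z hzmem
                  have hadjz : (G.deleteEdges {s(y,y1)}).Adj a b := by
                    simp only [SimpleGraph.deleteEdges_adj, Set.mem_singleton_iff]
                    refine ⟨hG, fun hc => ?_⟩
                    rcases Sym2.eq_iff.mp hc with ⟨h1', _⟩ | ⟨_, h2'⟩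
                    · exact hya h1'
                    · exact hyb h2'
                  rcases Sym2.mem_iff.mp hzmem with rfl | rfl
                  · exact h
                  · exact h.trans hadjz.reachable
                · refine Or.inr (Or.inr ⟨he1, ?_⟩)
                  intro z hzmem
                  have hadjz : (G.deleteEdges {s(y,y2)}).Adj a b := by
                    simp only [SimpleGraph.deleteEdges_adj, Set.mem_singleton_iff]
                    refine ⟨hG, fun hc => ?_⟩
                    rcases Sym2.eq_iff.mp hc with ⟨h1', _⟩ | ⟨_, h2'⟩
                    · exact hya h1'
                    · exact hyb h2'
                  rcases Sym2.mem_iff.mp hzmem with rfl | rfl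
                  · exact h
                  · exact h.trans hadjz.reachable
        · rintro ((rfl | rfl) | (⟨he1, he2⟩ | ⟨he1, he2⟩))
          · refine ⟨SimpleGraph.mem_edgeFinset.mpr (G.mem_edgeSet.mpr hy1), ?_⟩
            intro z hz
            rcases Sym2.mem_iff.mp hz with rfl | rfl
            · exact SimpleGraph.Reachable.refl _
            · exact hadjd1.reachable
          · refine ⟨SimpleGraph.mem_edgeFinset.mpr (G.mem_edgeSet.mpr hy2), ?_⟩
            intro z hz
            rcases Sym2.mem_iff.mp hz with rfl | rfl
            · exact SimpleGraph.Reachable.refl _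
            · exact hadjd2.reachable
          · exact ⟨he1, fun z hz => farSubset hA hxy hy1 hy1x (he2 z hz)⟩
          · exact ⟨he1, fun z hz => farSubset hA hxy hy2 hy2x (he2 z hz)⟩
      have hpairne : s(y,y1) ≠ s(y,y2) := by
        intro hc
        rcases Sym2.eq_iff.mp hc with ⟨_, h2'⟩ | ⟨_, h2'⟩
        · exact h12 h2'
        · exact G.irrefl (h2' ▸ hy1)
      have hEdisj12 : Disjoint
          (G.edgeFinset.filter fun e => ∀ z ∈ e, (G.deleteEdges {s(y,y1)}).Reachable y1 z)
          (G.edgeFinset.filter fun e => ∀ z ∈ e, (G.deleteEdges {s(y,y2)}).Reachable y2 z) := by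
        rw [Finset.disjoint_left]
        intro e he1 he2
        rw [Finset.mem_filter] at he1 he2
        induction e with
        | _ a b =>
          exact farDisjoint hA hy1 hy2 h12 (he1.2 a (by simp)) (he2.2 a (by simp))
      have hEdisjP : Disjoint ({s(y,y1), s(y,y2)} : Finset (Sym2 V))
          ((G.edgeFinset.filter fun e => ∀ z ∈ e, (G.deleteEdges {s(y,y1)}).Reachable y1 z)
          ∪ (G.edgeFinset.filter fun e => ∀ z ∈ e, (G.deleteEdges {s(y,y2)}).Reachable y2 z)) := by
        rw [Finset.disjoint_left]
        intro e he hin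
        rcases Finset.mem_union.mp hin with hin | hin <;>
          rw [Finset.mem_filter] at hin <;>
          rcases Finset.mem_insert.mp he with rfl | he' <;>
          first
            | (exact hyn1 (hin.2 y (by simp)))
            | (exact hyn2 (hin.2 y (by simp)))
            | (rw [Finset.mem_singleton] at he'; subst he'; exact hyn1 (hin.2 y (by simp)))
            | (rw [Finset.mem_singleton] at he'; subst he'; exact hyn2 (hin.2 y (by simp)))
      have hEcard : (G.edgeFinset.filter fun e => ∀ z ∈ e, (G.deleteEdges {s(x,y)}).Reachable y z).card
          = 2 + ((G.edgeFinset.filter fun e => ∀ z ∈ e, (G.deleteEdges {s(y,y1)}).Reachable y1 z).card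
          + (G.edgeFinset.filter fun e => ∀ z ∈ e, (G.deleteEdges {s(y,y2)}).Reachable y2 z).card) := by
        rw [hEsplit, Finset.card_union_of_disjoint hEdisjP, Finset.card_union_of_disjoint hEdisj12]
        congr 1
        rw [Finset.card_insert_of_notMem (by simpa using hpairne), Finset.card_singleton]
      constructor
      · omega
      · omega


lemma term_rewrite {f m j : ℕ} (h1 : 1 ≤ j) (hj : j ≤ f) (hf : f ≤ m) :
    f.choose j * (j.factorial * (m - j).factorial)
      = f.factorial * (m - f).factorial * (m - j).choose (f - j) := by
  have e1 : (m - j) - (f - j) = m - f := by omega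
  have h2 : (m - j).choose (f - j) * (f - j).factorial * (m - f).factorial
      = (m - j).factorial := by
    rw [← e1]
    exact Nat.choose_mul_factorial_mul_factorial (by omega)
  have h3 : f.choose j * j.factorial * (f - j).factorial = f.factorial :=
    Nat.choose_mul_factorial_mul_factorial hj
  calc f.choose j * (j.factorial * (m - j).factorial)
      = f.choose j * (j.factorial * ((m - j).choose (f - j) * (f - j).factorial
          * (m - f).factorial)) := by rw [h2]
    _ = (f.choose j * j.factorial * (f - j).factorial) * (m - f).factorial
          * (m - j).choose (f - j) := by ring
    _ = f.factorial * (m - f).factorial * (m - j).choose (f - j) := by rw [h3]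

lemma hockey {f m : ℕ} (hf : 1 ≤ f) (hfm : f ≤ m) :
    ∑ j ∈ Icc 1 f, (m - j).choose (f - j) = m.choose (f - 1) := by
  have step1 : ∑ j ∈ Icc 1 f, (m - j).choose (f - j)
      = ∑ a ∈ Icc (m - f) (m - 1), a.choose (m - f) := by
    apply Finset.sum_nbij' (fun j => m - j) (fun a => m - a)
    · intro j hj; rw [Finset.mem_Icc] at hj ⊢; omega
    · intro a ha; rw [Finset.mem_Icc] at ha ⊢; omega
    · intro j hj; rw [Finset.mem_Icc] at hj; omega
    · intro a ha; rw [Finset.mem_Icc] at ha; omega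
    · intro j hj
      rw [Finset.mem_Icc] at hj
      have h5 : m - f ≤ m - j := by omega
      have h6 := Nat.choose_symm h5
      have h7 : (m - j) - (m - f) = f - j := by omega
      rw [h7] at h6
      exact h6
  rw [step1, Nat.sum_Icc_choose]
  have : m - 1 + 1 = m := by omega
  rw [this]
  have : f - 1 = m - (m - f + 1) := by omega
  rw [this]
  exact (Nat.choose_symm (by omega)).symm

lemma key_sum {f m : ℕ} (hf : 1 ≤ f) (hfm : f ≤ m) :
    ∑ j ∈ Icc 1 f, f.choose j * (j.factorial * (m - j).factorial)
      = f.factorial * (m - f).factorial * m.choose (f - 1) := by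
  rw [← hockey hf hfm, Finset.mul_sum]
  apply Finset.sum_congr rfl
  intro j hj
  rw [Finset.mem_Icc] at hj
  exact term_rewrite hj.1 hj.2 hfm

lemma powerset_sum {α : Type*} (L : Finset α) (φ : ℕ → ℕ) :
    ∑ T ∈ L.powerset.erase ∅, φ T.card
      = ∑ j ∈ Icc 1 L.card, L.card.choose j * φ j := by
  have h0 : (∅ : Finset α) ∈ L.powerset := Finset.empty_mem_powerset L
  have h1 : φ 0 + ∑ T ∈ L.powerset.erase ∅, φ T.card = ∑ T ∈ L.powerset, φ T.card := by
    have := Finset.add_sum_erase _ (fun T => φ T.card) h0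
    simpa using this
  have h2 : ∑ T ∈ L.powerset, φ T.card
      = ∑ m ∈ Finset.range (L.card + 1), L.card.choose m • φ m :=
    Finset.sum_powerset_apply_card φ
  have h3 : ∑ m ∈ Finset.range (L.card + 1), L.card.choose m • φ m
      = φ 0 + ∑ m ∈ Finset.range L.card, L.card.choose (m+1) • φ (m+1) := by
    rw [Finset.sum_range_succ']
    simp [add_comm]
  have h4 : ∑ j ∈ Icc 1 L.card, L.card.choose j * φ j
      = ∑ m ∈ Finset.range L.card, L.card.choose (m+1) • φ (m+1) := by
    apply Finset.sum_nbij' (fun j => j - 1) (fun m => m + 1)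
    · intro j hj; rw [Finset.mem_Icc] at hj; rw [Finset.mem_range]; omega
    · intro m hm; rw [Finset.mem_range] at hm; rw [Finset.mem_Icc]; omega
    · intro j hj; rw [Finset.mem_Icc] at hj; omega
    · intro m _; omega
    · intro j hj
      rw [Finset.mem_Icc] at hj
      have : j - 1 + 1 = j := by omega
      rw [this, smul_eq_mul]
  omega


/-- rewrite the marginal contribution as a sum of indicators -/
lemma PD_diff [Fintype V] (w : Sym2 V → ℝ) (S : Finset V) (i : V) :
    PD G w S - PD G w (S.erase i)
      = ∑ e ∈ G.edgeFinset,
          if ((∃ a ∈ S, ∃ b ∈ S, ¬ (G.deleteEdges {e}).Reachable a b) ∧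
             ¬ (∃ a ∈ S.erase i, ∃ b ∈ S.erase i, ¬ (G.deleteEdges {e}).Reachable a b))
          then w e else 0 := by
  unfold PD
  rw [← Finset.sum_sub_distrib]
  apply Finset.sum_congr rfl
  intro e _
  by_cases h2 : (∃ a ∈ S.erase i, ∃ b ∈ S.erase i, ¬ (G.deleteEdges {e}).Reachable a b)
  · have h1 : (∃ a ∈ S, ∃ b ∈ S, ¬ (G.deleteEdges {e}).Reachable a b) := by
      obtain ⟨a, ha, b, hb, hr⟩ := h2
      exact ⟨a, Finset.mem_of_mem_erase ha, b, Finset.mem_of_mem_erase hb, hr⟩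
    rw [if_pos h1, if_pos h2, if_neg (fun h => h.2 h2)]
    ring
  · by_cases h1 : (∃ a ∈ S, ∃ b ∈ S, ¬ (G.deleteEdges {e}).Reachable a b)
    · rw [if_pos h1, if_neg h2, if_pos ⟨h1, h2⟩]
      ring
    · rw [if_neg h1, if_neg h2, if_neg (fun h => h1 h.1)]
      ring


lemma natA (k : ℕ) (hk : 1 ≤ k) :
    ((k+1).factorial * ((k-1).factorial * (2*k).choose k)) * (k * (2*k+1))
      = (k+1) * (2*k+1).factorial := by
  apply Nat.eq_of_mul_eq_mul_right (Nat.factorial_pos k)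
  have h1 : k * (k-1).factorial = k.factorial := Nat.mul_factorial_pred (by omega)
  have h2 : (2*k).choose k * k.factorial * k.factorial = (2*k).factorial := by
    have h := Nat.choose_mul_factorial_mul_factorial (show k ≤ 2*k by omega)
    rw [show 2*k - k = k by omega] at h
    exact h
  have h3 : (2*k+1).factorial = (2*k+1) * (2*k).factorial := Nat.factorial_succ _
  have h4 : (k+1).factorial = (k+1) * k.factorial := Nat.factorial_succ k
  calc ((k+1).factorial * ((k-1).factorial * (2*k).choose k)) * (k * (2*k+1)) * k.factorial
      = (k+1).factorial * (2*k+1) * (k * (k-1).factorial)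
          * ((2*k).choose k * k.factorial) := by ring
    _ = (k+1).factorial * (2*k+1) * k.factorial * ((2*k).choose k * k.factorial) := by rw [h1]
    _ = (k+1).factorial * (2*k+1) * ((2*k).choose k * k.factorial * k.factorial) := by ring
    _ = (k+1).factorial * (2*k+1) * (2*k).factorial := by rw [h2]
    _ = (k+1) * (2*k+1).factorial * k.factorial := by rw [h3, h4]; ring


end ShapAux

open ShapAux in
/-- In the tree `T_ε` (a central edge `e = {u,v}` of weight `1/ε`
separating a subtree with `k` leaves `L1` whose `2k−2` edges have weight `ε/(2k−2)`
from a subtree with `k+1` leaves `L2` whose `2k` edges have weight `ε/(2k)`), every leaf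
`i ∈ L1` satisfies `SV_i ≥ (k+1)/(ε(2k²+k)) + ε/(2k²+k)`. -/
theorem shapley_lower_bound_L1
    {V : Type*} [Fintype V] (G : SimpleGraph V)
    (hT : G.IsTree) (hdeg : ∀ v, G.degree v = 1 ∨ G.degree v = 3)
    (k : ℕ) (hk : 2 ≤ k) (hcard : (phyloLeaves G).card = 2 * k + 1)
    (u v : V) (huv : G.Adj u v)
    (hL1card : ((phyloLeaves G).filter
      (fun x => (G.deleteEdges {s(u, v)}).Reachable u x)).card = k)
    (hL2card : ((phyloLeaves G).filter
      (fun x => (G.deleteEdges {s(u, v)}).Reachable v x)).card = k + 1)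
    (ε : ℝ) (hε : 0 < ε)
    (w : Sym2 V → ℝ)
    (hwe : w s(u, v) = 1 / ε)
    (hw1 : ∀ e ∈ G.edgeSet, e ≠ s(u, v) →
      (∀ x, x ∈ e → (G.deleteEdges {s(u, v)}).Reachable u x) →
      w e = ε / (2 * (k : ℝ) - 2))
    (hw2 : ∀ e ∈ G.edgeSet, e ≠ s(u, v) →
      (∀ x, x ∈ e → (G.deleteEdges {s(u, v)}).Reachable v x) →
      w e = ε / (2 * (k : ℝ))) :
    ∀ i ∈ (phyloLeaves G).filter (fun x => (G.deleteEdges {s(u, v)}).Reachable u x),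
      ((k : ℝ) + 1) / (ε * (2 * (k : ℝ) ^ 2 + k)) + ε / (2 * (k : ℝ) ^ 2 + k)
        ≤ SV G w i := by
  intro i hi
  rw [Finset.mem_filter] at hi
  obtain ⟨hiL, hRui⟩ := hi
  have hconn : G.Connected := hT.isConnected
  have hacyc : G.IsAcyclic := hT.IsAcyclic
  set L : Finset V := phyloLeaves G with hL
  set c : Sym2 V := s(u, v) with hc
  set n : ℕ := L.card with hn
  have hbr : ¬ (G.deleteEdges {c}).Reachable u v := bridge_of_acyclic hacyc huv
  have hdich : ∀ z, (G.deleteEdges {c}).Reachable u z ∨ (G.deleteEdges {c}).Reachable v z :=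
    fun z => reach_or hconn huv z
  have hcm : c ∈ G.edgeFinset := SimpleGraph.mem_edgeFinset.mpr (G.mem_edgeSet.mpr huv)
  -- side classification for non-central edges
  have hside : ∀ e ∈ G.edgeFinset, e ≠ c →
      ((∀ x ∈ e, (G.deleteEdges {c}).Reachable u x) ∨
       (∀ x ∈ e, (G.deleteEdges {c}).Reachable v x)) := by
    intro e he hne
    induction e with
    | _ a b =>
      have hG : G.Adj a b := G.mem_edgeSet.mp (SimpleGraph.mem_edgeFinset.mp he)
      have hadj : (G.deleteEdges {c}).Adj a b := by
        simp only [SimpleGraph.deleteEdges_adj, Set.mem_singleton_iff]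
        exact ⟨hG, hne⟩
      have hmemab : ∀ z ∈ s(a,b), z = a ∨ z = b := fun z hz => Sym2.mem_iff.mp hz
      rcases hdich a with ha | ha
      · left
        intro z hz
        rcases hmemab z hz with rfl | rfl
        · exact ha
        · exact ha.trans hadj.reachable
      · right
        intro z hz
        rcases hmemab z hz with rfl | rfl
        · exact ha
        · exact ha.trans hadj.reachable
  have hkR : (2 : ℝ) ≤ (k : ℝ) := by exact_mod_cast hk
  have hwpos : ∀ e ∈ G.edgeFinset, 0 ≤ w e := by
    intro e he
    by_cases hne : e = c
    · rw [hne, hc, hwe]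
      positivity
    · rcases hside e he hne with h | h
      · rw [hw1 e (SimpleGraph.mem_edgeFinset.mp he) (hc ▸ hne) (fun x hx => h x hx)]
        have : (0:ℝ) < 2 * (k:ℝ) - 2 := by linarith
        positivity
      · rw [hw2 e (SimpleGraph.mem_edgeFinset.mp he) (hc ▸ hne) (fun x hx => h x hx)]
        positivity
  -- the L2 side leaves
  set L2f : Finset V := L.filter (fun x => (G.deleteEdges {c}).Reachable v x) with hL2f
  have hiL2 : i ∉ L2f := by
    rw [hL2f, Finset.mem_filter]
    rintro ⟨-, hvi⟩
    exact hbr (hRui.trans hvi.symm)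
  have hsep2 : ∀ t ∈ L2f, ¬ (G.deleteEdges {c}).Reachable i t := by
    intro t ht hit
    rw [hL2f, Finset.mem_filter] at ht
    exact hbr ((hRui.trans hit).trans ht.2.symm)
  -- families
  set P1 : Finset (Finset V) := L2f.powerset.erase ∅ with hP1
  set P2 : Finset (Finset V) := (L.erase i).image (fun b => ({b} : Finset V)) with hP2
  set D : Finset (Finset V) := P1 ∪ P2 with hD
  have hInotin : ∀ T ∈ D, i ∉ T := by
    intro T hT' hiT
    rcases Finset.mem_union.mp hT' with h | h
    · rw [hP1] at h
      have := Finset.mem_powerset.mp (Finset.mem_of_mem_erase h)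
      exact hiL2 (this hiT)
    · rw [hP2] at h
      obtain ⟨b, hb, rfl⟩ := Finset.mem_image.mp h
      rw [Finset.mem_singleton] at hiT
      exact (Finset.mem_erase.mp hb).1 (hiT ▸ rfl)
  have hTsubL : ∀ T ∈ D, T ⊆ L := by
    intro T hT'
    rcases Finset.mem_union.mp hT' with h | h
    · rw [hP1] at h
      exact (Finset.mem_powerset.mp (Finset.mem_of_mem_erase h)).trans (Finset.filter_subset _ _)
    · rw [hP2] at h
      obtain ⟨b, hb, rfl⟩ := Finset.mem_image.mp h
      intro z hz
      rw [Finset.mem_singleton] at hz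
      exact hz ▸ Finset.mem_of_mem_erase hb

  -- abbreviation lemmas
  have hncard : n = 2 * k + 1 := hcard
  have hL2fcard : L2f.card = k + 1 := hL2card
  have hkR2 : (0:ℝ) < 2 * (k:ℝ) - 2 := by linarith
  have hkR0 : (0:ℝ) < (k:ℝ) := by linarith
  -- far side facts
  have hfar : ∀ x y : V, G.Adj x y →
      (1 ≤ ((phyloLeaves G).filter fun z => (G.deleteEdges {s(x,y)}).Reachable y z).card ∧
      (G.edgeFinset.filter fun e => ∀ z ∈ e, (G.deleteEdges {s(x,y)}).Reachable y z).card + 2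
        = 2 * ((phyloLeaves G).filter fun z => (G.deleteEdges {s(x,y)}).Reachable y z).card) := by
    intro x y h
    refine farside hacyc hdeg (Fintype.card V) x y h ?_
    simpa using Finset.card_filter_le Finset.univ
      (fun z => (G.deleteEdges {s(x,y)}).Reachable y z)
  -- separation witness for all non-central edges
  have hsepw : ∀ e ∈ G.edgeFinset, e ≠ c →
      ∃ b ∈ L.erase i, ¬ (G.deleteEdges {e}).Reachable i b := by
    intro e he hne
    induction e with
    | _ x y =>
      have hadj : G.Adj x y := G.mem_edgeSet.mp (SimpleGraph.mem_edgeFinset.mp he)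
      have hbxy : ¬ (G.deleteEdges {s(x,y)}).Reachable x y := bridge_of_acyclic hacyc hadj
      rcases reach_or hconn hadj i with hxi | hyi
      · obtain ⟨b, hb⟩ := Finset.card_pos.mp (lt_of_lt_of_le Nat.zero_lt_one (hfar x y hadj).1)
        rw [Finset.mem_filter] at hb
        refine ⟨b, ?_, ?_⟩
        · rw [Finset.mem_erase]
          refine ⟨?_, hb.1⟩
          rintro rfl
          exact hbxy (hxi.trans hb.2.symm)
        · intro hib
          exact hbxy (hxi.trans (hib.trans hb.2.symm))
      · have hadj' := hadj.symm
        have hfxy := hfar y x hadj'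
        rw [(Sym2.eq_swap : s(y,x) = s(x,y))] at hfxy
        obtain ⟨b, hb⟩ := Finset.card_pos.mp (lt_of_lt_of_le Nat.zero_lt_one hfxy.1)
        rw [Finset.mem_filter] at hb
        refine ⟨b, ?_, ?_⟩
        · rw [Finset.mem_erase]
          refine ⟨?_, hb.1⟩
          rintro rfl
          exact hbxy (hb.2.trans hyi.symm)
        · intro hib
          exact hbxy (hb.2.trans (hib.symm.trans hyi.symm))
  -- edge side sets
  set Fu : Finset (Sym2 V) :=
    G.edgeFinset.filter (fun e => ∀ z ∈ e, (G.deleteEdges {c}).Reachable u z) with hFu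
  set Fv : Finset (Sym2 V) :=
    G.edgeFinset.filter (fun e => ∀ z ∈ e, (G.deleteEdges {c}).Reachable v z) with hFv
  have hvc : v ∈ c := by rw [hc]; simp
  have huc : u ∈ c := by rw [hc]; simp
  have hcu : c ∉ Fu := by
    rw [hFu, Finset.mem_filter]
    rintro ⟨-, hall⟩
    exact hbr (hall v hvc)
  have hcv : c ∉ Fv := by
    rw [hFv, Finset.mem_filter]
    rintro ⟨-, hall⟩
    exact hbr (hall u huc).symm
  have hsplitE : G.edgeFinset.erase c = Fu ∪ Fv := by
    ext e
    constructor
    · intro he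
      obtain ⟨hne, heE⟩ := Finset.mem_erase.mp he
      rcases hside e heE hne with h | h
      · exact Finset.mem_union_left _ (Finset.mem_filter.mpr ⟨heE, h⟩)
      · exact Finset.mem_union_right _ (Finset.mem_filter.mpr ⟨heE, h⟩)
    · intro he
      rcases Finset.mem_union.mp he with h | h
      · refine Finset.mem_erase.mpr ⟨?_, (Finset.mem_filter.mp h).1⟩
        rintro rfl
        exact hcu h
      · refine Finset.mem_erase.mpr ⟨?_, (Finset.mem_filter.mp h).1⟩
        rintro rfl
        exact hcv h
  have hdisjE : Disjoint Fu Fv := by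
    rw [Finset.disjoint_left]
    intro e heu hev
    rw [hFu, Finset.mem_filter] at heu
    rw [hFv, Finset.mem_filter] at hev
    induction e with
    | _ a b =>
      have h1 := heu.2 a (by simp)
      have h2 := hev.2 a (by simp)
      exact hbr (h1.trans h2.symm)
  -- cardinalities of the side edge sets
  have hfarU := hfar v u huv.symm
  rw [(Sym2.eq_swap : s(v,u) = s(u,v)), ← hc] at hfarU
  have hfarV := hfar u v huv
  rw [← hc] at hfarV
  have hFucard : Fu.card = 2 * k - 2 := by
    have := hfarU.2
    rw [← hL] at this
    rw [hL1card] at this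
    rw [hFu]
    omega
  have hFvcard : Fv.card = 2 * k := by
    have := hfarV.2
    rw [← hL] at this
    rw [hL2card] at this
    rw [hFv]
    omega
  -- sum of weights over non-central edges
  have hEsum : ∑ e ∈ G.edgeFinset.erase c, w e = ε + ε := by
    rw [hsplitE, Finset.sum_union hdisjE]
    have hu' : ∑ e ∈ Fu, w e = Fu.card • (ε / (2 * (k:ℝ) - 2)) := by
      rw [Finset.sum_congr rfl, Finset.sum_const]
      intro e he
      have hem := Finset.mem_filter.mp he
      have hnec : e ≠ c := by
        rintro rfl
        exact hcu he
      exact hw1 e (SimpleGraph.mem_edgeFinset.mp hem.1) (hc ▸ hnec) (fun x hx => hem.2 x hx)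
    have hv' : ∑ e ∈ Fv, w e = Fv.card • (ε / (2 * (k:ℝ))) := by
      rw [Finset.sum_congr rfl, Finset.sum_const]
      intro e he
      have hem := Finset.mem_filter.mp he
      have hnec : e ≠ c := by
        rintro rfl
        exact hcv he
      exact hw2 e (SimpleGraph.mem_edgeFinset.mp hem.1) (hc ▸ hnec) (fun x hx => hem.2 x hx)
    rw [hu', hv', hFucard, hFvcard]
    have hc1 : ((2 * k - 2 : ℕ) : ℝ) = 2 * (k:ℝ) - 2 := by
      have : (2:ℕ) ≤ 2 * k := by omega
      push_cast [Nat.cast_sub this]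
      ring
    have hc2 : ((2 * k : ℕ) : ℝ) = 2 * (k:ℝ) := by push_cast; ring
    rw [nsmul_eq_mul, nsmul_eq_mul, hc1, hc2]
    field_simp
    rw [div_self (by linarith : (k:ℝ) - 1 ≠ 0)]
  -- the functional F
  have hFnonneg : ∀ S ∈ L.powerset.filter (fun S => i ∈ S),
      (0:ℝ) ≤ ((S.card - 1).factorial : ℝ) * ((n - S.card).factorial : ℝ)
        * (PD G w S - PD G w (S.erase i)) := by
    intro S _
    apply mul_nonneg (mul_nonneg (by positivity) (by positivity))
    rw [PD_diff]
    apply Finset.sum_nonneg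
    intro e he
    split
    · exact hwpos e he
    · exact le_refl 0

  -- image family
  have himg : D.image (insert i) ⊆ L.powerset.filter (fun S => i ∈ S) := by
    intro S hS
    obtain ⟨T, hT', rfl⟩ := Finset.mem_image.mp hS
    rw [Finset.mem_filter, Finset.mem_powerset]
    exact ⟨Finset.insert_subset hiL (hTsubL T hT'), Finset.mem_insert_self i T⟩
  have hInj : ∀ T1 ∈ D, ∀ T2 ∈ D, insert i T1 = insert i T2 → T1 = T2 := by
    intro T1 h1 T2 h2 h
    rw [← Finset.erase_insert (hInotin T1 h1), ← Finset.erase_insert (hInotin T2 h2), h]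
  have step1 : ∑ T ∈ D, (((insert i T).card - 1).factorial : ℝ)
        * ((n - (insert i T).card).factorial : ℝ)
        * (PD G w (insert i T) - PD G w ((insert i T).erase i))
      ≤ ∑ S ∈ L.powerset.filter (fun S => i ∈ S),
        ((S.card - 1).factorial : ℝ) * ((n - S.card).factorial : ℝ)
        * (PD G w S - PD G w (S.erase i)) := by
    have e1 := Finset.sum_image (f := fun S : Finset V => ((S.card - 1).factorial : ℝ)
      * ((n - S.card).factorial : ℝ) * (PD G w S - PD G w (S.erase i))) hInj
    rw [← e1]
    exact Finset.sum_le_sum_of_subset_of_nonneg himg (fun S hS _ => hFnonneg S hS)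
  -- pointwise lower bound
  have hpoint : ∀ T ∈ D,
      (if T ∈ P1 then ((T.card.factorial : ℝ) * (((n - 1 - T.card).factorial : ℕ) : ℝ) * w c)
        else 0)
      + (if T ∈ P2 then (((n - 2).factorial : ℝ) * ∑ e ∈ G.edgeFinset.erase c,
          (if ∀ b ∈ T, ¬ (G.deleteEdges {e}).Reachable i b then w e else 0)) else 0)
      ≤ (((insert i T).card - 1).factorial : ℝ)
        * ((n - (insert i T).card).factorial : ℝ)
        * (PD G w (insert i T) - PD G w ((insert i T).erase i)) := by
    intro T hTD
    have hiT := hInotin T hTD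
    have hSe : (insert i T).erase i = T := Finset.erase_insert hiT
    have hScard : (insert i T).card = T.card + 1 := Finset.card_insert_of_notMem hiT
    have hcoe1 : (insert i T).card - 1 = T.card := by omega
    have hcoe2 : n - (insert i T).card = n - 1 - T.card := by omega
    rw [PD_diff, hSe, hcoe1, hcoe2]
    rw [← Finset.add_sum_erase _ _ hcm, mul_add]
    apply add_le_add
    · -- central edge contribution
      by_cases hP : T ∈ P1
      · rw [if_pos hP]
        obtain ⟨hTne, hTP⟩ := Finset.mem_erase.mp hP
        have hTL2 : T ⊆ L2f := Finset.mem_powerset.mp hTP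
        obtain ⟨t, ht⟩ := Finset.nonempty_iff_ne_empty.mpr hTne
        have hcond : ((∃ a ∈ insert i T, ∃ b ∈ insert i T,
              ¬ (G.deleteEdges {c}).Reachable a b) ∧
            ¬ (∃ a ∈ T, ∃ b ∈ T, ¬ (G.deleteEdges {c}).Reachable a b)) := by
          constructor
          · exact ⟨i, Finset.mem_insert_self i T, t, Finset.mem_insert_of_mem ht,
              hsep2 t (hTL2 ht)⟩
          · rintro ⟨a, ha, b, hb, hr⟩
            have hva := (Finset.mem_filter.mp (hTL2 ha)).2
            have hvb := (Finset.mem_filter.mp (hTL2 hb)).2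
            exact hr (hva.symm.trans hvb)
        rw [if_pos hcond]
      · rw [if_neg hP]
        apply mul_nonneg (mul_nonneg (by positivity) (by positivity))
        split
        · exact hwpos c hcm
        · exact le_refl 0
    · -- non-central edges contribution
      by_cases hP : T ∈ P2
      · rw [if_pos hP]
        obtain ⟨b, hb, rfl⟩ := Finset.mem_image.mp hP
        have hcard1 : ({b} : Finset V).card = 1 := Finset.card_singleton b
        rw [hcard1]
        have hco : n - 1 - 1 = n - 2 := by omega
        rw [hco]
        have h1f : ((1:ℕ).factorial : ℝ) = 1 := by norm_num
        rw [h1f, one_mul]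
        apply mul_le_mul_of_nonneg_left _ (by positivity)
        apply Finset.sum_le_sum
        intro e he
        have heE : e ∈ G.edgeFinset := Finset.mem_of_mem_erase he
        by_cases hsep : ∀ b' ∈ ({b} : Finset V), ¬ (G.deleteEdges {e}).Reachable i b'
        · rw [if_pos hsep]
          have hsepb : ¬ (G.deleteEdges {e}).Reachable i b :=
            hsep b (Finset.mem_singleton_self b)
          have hcond : ((∃ a ∈ insert i ({b} : Finset V), ∃ b' ∈ insert i ({b} : Finset V),
                ¬ (G.deleteEdges {e}).Reachable a b') ∧
              ¬ (∃ a ∈ ({b} : Finset V), ∃ b' ∈ ({b} : Finset V),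
                ¬ (G.deleteEdges {e}).Reachable a b')) := by
            constructor
            · exact ⟨i, Finset.mem_insert_self i _, b,
                Finset.mem_insert_of_mem (Finset.mem_singleton_self b), hsepb⟩
            · rintro ⟨a, ha, b', hb', hr⟩
              rw [Finset.mem_singleton] at ha hb'
              subst ha; subst hb'
              exact hr (SimpleGraph.Reachable.refl _)
          rw [if_pos hcond]
        · rw [if_neg hsep]
          split
          · exact hwpos e heE
          · exact le_refl 0
      · rw [if_neg hP]
        apply mul_nonneg (mul_nonneg (by positivity) (by positivity))
        apply Finset.sum_nonneg
        intro e he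
        split
        · exact hwpos e (Finset.mem_of_mem_erase he)
        · exact le_refl 0

  -- evaluate the two family sums
  have hP1D : P1 ⊆ D := Finset.subset_union_left
  have hP2D : P2 ⊆ D := Finset.subset_union_right
  have step2a : ∑ T ∈ D, (if T ∈ P1 then ((T.card.factorial : ℝ)
        * (((n - 1 - T.card).factorial : ℕ) : ℝ) * w c) else 0)
      = ∑ T ∈ P1, ((T.card.factorial : ℝ) * (((n - 1 - T.card).factorial : ℕ) : ℝ) * w c) := by
    rw [Finset.sum_ite_mem, Finset.inter_eq_right.mpr hP1D]
  have step2b : ∑ T ∈ D, (if T ∈ P2 then (((n - 2).factorial : ℝ)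
        * ∑ e ∈ G.edgeFinset.erase c,
          (if ∀ b ∈ T, ¬ (G.deleteEdges {e}).Reachable i b then w e else 0)) else 0)
      = ∑ T ∈ P2, (((n - 2).factorial : ℝ) * ∑ e ∈ G.edgeFinset.erase c,
          (if ∀ b ∈ T, ¬ (G.deleteEdges {e}).Reachable i b then w e else 0)) := by
    rw [Finset.sum_ite_mem, Finset.inter_eq_right.mpr hP2D]
  -- A part: exact evaluation
  have hAnat : ∑ T ∈ P1, T.card.factorial * (n - 1 - T.card).factorial
      = (k+1).factorial * ((k-1).factorial * (2*k).choose k) := by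
    have hps := powerset_sum L2f (fun j => j.factorial * (n - 1 - j).factorial)
    rw [hL2fcard] at hps
    rw [hP1, hps]
    have hcg : ∀ j ∈ Icc 1 (k+1), (k+1).choose j * (j.factorial * (n - 1 - j).factorial)
        = (k+1).choose j * (j.factorial * (2*k - j).factorial) := by
      intro j hj
      have : n - 1 - j = 2*k - j := by omega
      rw [this]
    rw [Finset.sum_congr rfl hcg, key_sum (by omega) (by omega)]
    rw [show 2*k - (k+1) = k - 1 by omega, show k + 1 - 1 = k by omega]
    ring
  have hAeval : ∑ T ∈ P1, ((T.card.factorial : ℝ)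
        * (((n - 1 - T.card).factorial : ℕ) : ℝ) * w c)
      = (((k+1).factorial * ((k-1).factorial * (2*k).choose k) : ℕ) : ℝ) * w c := by
    rw [← hAnat]
    rw [Nat.cast_sum, ← Finset.sum_mul]
    congr 1
    apply Finset.sum_congr rfl
    intro T _
    push_cast
    ring
  -- B part: lower bound
  have hBeval : ((n - 2).factorial : ℝ) * (ε + ε)
      ≤ ∑ T ∈ P2, (((n - 2).factorial : ℝ) * ∑ e ∈ G.edgeFinset.erase c,
          (if ∀ b ∈ T, ¬ (G.deleteEdges {e}).Reachable i b then w e else 0)) := by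
    have hinj2 : ∀ x ∈ L.erase i, ∀ y ∈ L.erase i, ({x} : Finset V) = {y} → x = y := by
      intro x _ y _ h
      exact Finset.singleton_inj.mp h
    have himg2 := Finset.sum_image (f := fun T : Finset V => (((n - 2).factorial : ℝ)
        * ∑ e ∈ G.edgeFinset.erase c,
          (if ∀ b ∈ T, ¬ (G.deleteEdges {e}).Reachable i b then w e else 0))) hinj2
    rw [hP2, himg2]
    have hsimp : ∀ b0 : V, (fun T : Finset V => (((n - 2).factorial : ℝ)
        * ∑ e ∈ G.edgeFinset.erase c,
          (if ∀ b ∈ T, ¬ (G.deleteEdges {e}).Reachable i b then w e else 0))) {b0}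
        = ((n - 2).factorial : ℝ) * ∑ e ∈ G.edgeFinset.erase c,
          (if ¬ (G.deleteEdges {e}).Reachable i b0 then w e else 0) := by
      intro b0
      simp only [Finset.mem_singleton, forall_eq]
    rw [Finset.sum_congr rfl (fun b0 _ => hsimp b0)]
    rw [← Finset.mul_sum]
    apply mul_le_mul_of_nonneg_left _ (by positivity)
    rw [Finset.sum_comm]
    rw [← hEsum]
    apply Finset.sum_le_sum
    intro e he
    obtain ⟨hne, heE⟩ := Finset.mem_erase.mp he
    obtain ⟨b0, hb0, hb0sep⟩ := hsepw e heE hne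
    have hb0le : (if ¬ (G.deleteEdges {e}).Reachable i b0 then w e else 0)
        ≤ ∑ b ∈ L.erase i, (if ¬ (G.deleteEdges {e}).Reachable i b then w e else 0) := by
      apply Finset.single_le_sum (f := fun b => (if ¬ (G.deleteEdges {e}).Reachable i b
        then w e else 0)) _ hb0
      intro b _
      split
      · exact hwpos e heE
      · exact le_refl 0
    rw [if_pos hb0sep] at hb0le
    exact hb0le
  -- put the families together
  have step3 : (((k+1).factorial * ((k-1).factorial * (2*k).choose k) : ℕ) : ℝ) * w c
      + ((n - 2).factorial : ℝ) * (ε + ε)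
      ≤ ∑ T ∈ D, (((insert i T).card - 1).factorial : ℝ)
        * ((n - (insert i T).card).factorial : ℝ)
        * (PD G w (insert i T) - PD G w ((insert i T).erase i)) := by
    calc (((k+1).factorial * ((k-1).factorial * (2*k).choose k) : ℕ) : ℝ) * w c
        + ((n - 2).factorial : ℝ) * (ε + ε)
        ≤ (∑ T ∈ P1, ((T.card.factorial : ℝ) * (((n - 1 - T.card).factorial : ℕ) : ℝ) * w c))
          + ∑ T ∈ P2, (((n - 2).factorial : ℝ) * ∑ e ∈ G.edgeFinset.erase c,
            (if ∀ b ∈ T, ¬ (G.deleteEdges {e}).Reachable i b then w e else 0)) :=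
          add_le_add (le_of_eq hAeval.symm) hBeval
      _ = ∑ T ∈ D, ((if T ∈ P1 then ((T.card.factorial : ℝ)
            * (((n - 1 - T.card).factorial : ℕ) : ℝ) * w c) else 0)
          + (if T ∈ P2 then (((n - 2).factorial : ℝ) * ∑ e ∈ G.edgeFinset.erase c,
            (if ∀ b ∈ T, ¬ (G.deleteEdges {e}).Reachable i b then w e else 0)) else 0)) := by
          rw [Finset.sum_add_distrib, step2a, step2b]
      _ ≤ _ := Finset.sum_le_sum hpoint
  -- final arithmetic
  have hfle := le_trans step3 step1
  have hSVge : (1 / (n.factorial : ℝ))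
      * ((((k+1).factorial * ((k-1).factorial * (2*k).choose k) : ℕ) : ℝ) * w c
        + ((n - 2).factorial : ℝ) * (ε + ε)) ≤ SV G w i := by
    have h0 : (0:ℝ) ≤ 1 / (n.factorial : ℝ) := by positivity
    have := mul_le_mul_of_nonneg_left hfle h0
    calc (1 / (n.factorial : ℝ)) * _ ≤ (1 / (n.factorial : ℝ))
          * ∑ S ∈ L.powerset.filter (fun S => i ∈ S),
            ((S.card - 1).factorial : ℝ) * ((n - S.card).factorial : ℝ)
            * (PD G w S - PD G w (S.erase i)) := this
      _ = SV G w i := rfl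
  refine le_trans (le_of_eq ?_) hSVge
  -- pure arithmetic identity
  rw [hwe, hncard, show 2*k+1-2 = 2*k-1 by omega]
  have hAk := natA k (by omega)
  have hsplitfac : (2*k+1).factorial = (2*k+1) * ((2*k) * (2*k-1).factorial) := by
    have h3 : (2*k+1).factorial = (2*k+1) * (2*k).factorial := Nat.factorial_succ _
    have h5 : (2*k) * (2*k-1).factorial = (2*k).factorial :=
      Nat.mul_factorial_pred (by omega)
    rw [h3, ← h5]
  have hAkR : (((k+1).factorial * ((k-1).factorial * (2*k).choose k) : ℕ) : ℝ)
      * ((k:ℝ) * (2*(k:ℝ)+1)) = ((k:ℝ)+1) * (((2*k+1).factorial : ℕ) : ℝ) := by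
    exact_mod_cast congrArg (fun x : ℕ => (x : ℝ)) hAk
  have hFsplitR : (((2*k+1).factorial : ℕ) : ℝ)
      = (2*(k:ℝ)+1) * ((2*(k:ℝ)) * (((2*k-1).factorial : ℕ) : ℝ)) := by
    exact_mod_cast congrArg (fun x : ℕ => (x : ℝ)) hsplitfac
  set A' : ℝ := (((k+1).factorial * ((k-1).factorial * (2*k).choose k) : ℕ) : ℝ) with hA'
  set F1 : ℝ := (((2*k+1).factorial : ℕ) : ℝ) with hF1
  set F2 : ℝ := (((2*k-1).factorial : ℕ) : ℝ) with hF2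
  have hF1pos : 0 < F1 := by rw [hF1]; positivity
  have hF2pos : 0 < F2 := by rw [hF2]; positivity
  have hεne : ε ≠ 0 := ne_of_gt hε
  have hkne : (k:ℝ) ≠ 0 := ne_of_gt hkR0
  have h2k1ne : (2*(k:ℝ)+1) ≠ 0 := by positivity
  have hden : 2*(k:ℝ)^2 + k = (k:ℝ) * (2*(k:ℝ)+1) := by ring
  have e1 : (1 / F1) * (A' * (1/ε)) = ((k:ℝ)+1)/(ε*((k:ℝ)*(2*(k:ℝ)+1))) := by
    field_simp
    linear_combination hAkR
  have e2 : (1 / F1) * (F2 * (ε+ε)) = ε/((k:ℝ)*(2*(k:ℝ)+1)) := by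
    rw [hFsplitR]
    field_simp
    ring
  have efinal : 1/F1 * (A' * (1/ε) + F2*(ε+ε))
      = ((k:ℝ)+1)/(ε*((k:ℝ)*(2*(k:ℝ)+1))) + ε/((k:ℝ)*(2*(k:ℝ)+1)) := by
    rw [mul_add, e1, e2]
  rw [hden]
  exact efinal.symm
end
end

section
/- For every real number k ≥ 1 and every real ε with 0 < ε < √((k+2)/(k³+3k²−2)) (note k³+3k²−2 > 0 for k ≥ 1), the following strict inequality holds: (k+1)/(ε·(2k²+k)) + ε/(2k²+k) > k/(ε·(2k²+3k+1)) + ε·(2k²+5k−1)/(2k²+5k+2). -/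
/-- For every real `k ≥ 1` and every `ε` with
`0 < ε < √((k+2)/(k³+3k²−2))`, the strict inequality
`(k+1)/(ε(2k²+k)) + ε/(2k²+k) > k/(ε(2k²+3k+1)) + ε(2k²+5k−1)/(2k²+5k+2)` holds. -/
theorem bound_inequality (k ε : ℝ) (hk : 1 ≤ k) (hε : 0 < ε)
    (hε2 : ε < Real.sqrt ((k + 2) / (k ^ 3 + 3 * k ^ 2 - 2))) :
    (k + 1) / (ε * (2 * k ^ 2 + k)) + ε / (2 * k ^ 2 + k)
      > k / (ε * (2 * k ^ 2 + 3 * k + 1))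
        + ε * (2 * k ^ 2 + 5 * k - 1) / (2 * k ^ 2 + 5 * k + 2) := by
  have hd : (0:ℝ) < k ^ 3 + 3 * k ^ 2 - 2 := by nlinarith
  have h2 : ε ^ 2 < (k + 2) / (k ^ 3 + 3 * k ^ 2 - 2) :=
    (Real.lt_sqrt hε.le).mp hε2
  have h3 : ε ^ 2 * (k ^ 3 + 3 * k ^ 2 - 2) < k + 2 := by
    rwa [lt_div_iff₀ hd] at h2
  have ha : (0:ℝ) < 2 * k ^ 2 + k := by nlinarith
  have hb : (0:ℝ) < 2 * k ^ 2 + 3 * k + 1 := by nlinarith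
  have hc : (0:ℝ) < 2 * k ^ 2 + 5 * k + 2 := by nlinarith
  rw [gt_iff_lt, ← sub_pos]
  have key : (k + 1) / (ε * (2 * k ^ 2 + k)) + ε / (2 * k ^ 2 + k)
      - (k / (ε * (2 * k ^ 2 + 3 * k + 1))
        + ε * (2 * k ^ 2 + 5 * k - 1) / (2 * k ^ 2 + 5 * k + 2))
      = ((k + 2) - ε ^ 2 * (k ^ 3 + 3 * k ^ 2 - 2)) * (2 * k + 1) ^ 3
        / (ε * (2 * k ^ 2 + k) * (2 * k ^ 2 + 3 * k + 1) * (2 * k ^ 2 + 5 * k + 2)) := by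
    field_simp
    ring
  rw [key]
  apply div_pos
  · exact mul_pos (by linarith) (by positivity)
  · positivity
end
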